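/- arXiv:1401.7840 — 2 statements merged into one kernel-verified Lean document; each statement's English description precedes it below -/
import Mathlib

section
/- In the setting of the cut-off log-coordinate process with D := min_{i≤m} {ν_i d − log 2} > 0: for every j ∈ {1,…,m}, ℙ(liminf_{n→∞} −(1/n) Y_n^i ≥ D for all i ≠ j | Y_n^i ≤ −d for all i ≠ j and all n ∈ ℕ) = 1 (provided the conditioning event has positive probability). Moreover, for every θ > 0 and every b ∈ ℝ there exists s > 0 such that ℙ(∃ j ∈ {1,…,m} : Y_n^i < b for all i ≠ j and all n ∈ ℕ | ℱ_0) ≥ 1 − θ holds ℙ-a.s. on the event {X ∈ Ū_s}, where Ū_s := {x ∈ S^{m-1} : ∃ j ∀ i ≠ j : x_i ≤ s}. -/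
open MeasureTheory ProbabilityTheory Filter Topology

/-- The map of a quadratic stochastic operator given by coefficients `p`. -/
noncomputable def qsoMap {m : ℕ} (p : Fin m → Fin m → Fin m → ℝ) (x : Fin m → ℝ) :
    Fin m → ℝ :=
  fun k => ∑ i, ∑ j, p i j k * x i * x j

variable {m : ℕ}

lemma qso_p_le_one (p : Fin m → Fin m → Fin m → ℝ) (hnn : ∀ i j l, 0 ≤ p i j l)
    (hs : ∀ i j, ∑ l, p i j l = 1) (i j l : Fin m) : p i j l ≤ 1 := by
  calc p i j l ≤ ∑ l', p i j l' := Finset.single_le_sum (fun l' _ => hnn i j l') (Finset.mem_univ l)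
  _ = 1 := hs i j

lemma qso_p_diag (p : Fin m → Fin m → Fin m → ℝ)
    (hs : ∀ i j, ∑ l, p i j l = 1) (hv : ∀ i j l, l ≠ i → l ≠ j → p i j l = 0)
    (i : Fin m) : p i i i = 1 := by
  have := hs i i
  rwa [Finset.sum_eq_single i (fun l _ hl => hv i i l hl hl) (by simp)] at this

lemma qso_nonneg (p : Fin m → Fin m → Fin m → ℝ) (hnn : ∀ i j l, 0 ≤ p i j l)
    {x : Fin m → ℝ} (hx : ∀ i, 0 ≤ x i) (k : Fin m) : 0 ≤ qsoMap p x k := by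
  refine Finset.sum_nonneg fun i _ => Finset.sum_nonneg fun j _ => ?_
  exact mul_nonneg (mul_nonneg (hnn i j k) (hx i)) (hx j)

lemma qso_sq_le (p : Fin m → Fin m → Fin m → ℝ)
    (hs : ∀ i j, ∑ l, p i j l = 1) (hv : ∀ i j l, l ≠ i → l ≠ j → p i j l = 0)
    (hnn : ∀ i j l, 0 ≤ p i j l)
    {x : Fin m → ℝ} (hx : ∀ i, 0 ≤ x i) (k : Fin m) : x k ^ 2 ≤ qsoMap p x k := by
  have h1 : x k ^ 2 = p k k k * x k * x k := by
    rw [qso_p_diag p hs hv k]; ring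
  rw [h1]
  calc p k k k * x k * x k ≤ ∑ j, p k j k * x k * x j :=
        Finset.single_le_sum (f := fun j => p k j k * x k * x j)
          (fun j _ => mul_nonneg (mul_nonneg (hnn k j k) (hx k)) (hx j)) (Finset.mem_univ k)
  _ ≤ ∑ i, ∑ j, p i j k * x i * x j :=
        Finset.single_le_sum (f := fun i => ∑ j, p i j k * x i * x j)
          (fun i _ => Finset.sum_nonneg fun j _ =>
            mul_nonneg (mul_nonneg (hnn i j k) (hx i)) (hx j)) (Finset.mem_univ k)

lemma qso_sum (p : Fin m → Fin m → Fin m → ℝ)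
    (hs : ∀ i j, ∑ l, p i j l = 1) {x : Fin m → ℝ} (hxs : ∑ i, x i = 1) :
    ∑ k, qsoMap p x k = 1 := by
  unfold qsoMap
  rw [Finset.sum_comm]
  have : ∀ i : Fin m, ∑ k, ∑ j, p i j k * x i * x j = x i := by
    intro i
    rw [Finset.sum_comm]
    have : ∀ j : Fin m, ∑ k, p i j k * x i * x j = x i * x j := by
      intro j
      rw [← Finset.sum_mul, ← Finset.sum_mul, hs i j, one_mul]
    simp_rw [this, ← Finset.mul_sum, hxs, mul_one]
  simp_rw [this, hxs]

lemma qso_le_two (p : Fin m → Fin m → Fin m → ℝ)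
    (hs : ∀ i j, ∑ l, p i j l = 1) (hv : ∀ i j l, l ≠ i → l ≠ j → p i j l = 0)
    (hnn : ∀ i j l, 0 ≤ p i j l)
    {x : Fin m → ℝ} (hx : ∀ i, 0 ≤ x i) (hxs : ∑ i, x i = 1) (k : Fin m) :
    qsoMap p x k ≤ 2 * x k := by
  have hb : ∀ i j : Fin m, p i j k * x i * x j ≤
      (if i = k then x j * x k else 0) + (if j = k then x i * x k else 0) := by
    intro i j
    have key : ∀ a b c : Fin m, p a b c * x a * x b ≤ x a * x b := by
      intro a b c
      have h1 := mul_le_mul_of_nonneg_right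
        (mul_le_mul_of_nonneg_right (qso_p_le_one p hnn hs a b c) (hx a)) (hx b)
      simpa using h1
    by_cases hik : i = k
    · subst hik
      by_cases hjk : j = i
      · subst hjk
        rw [if_pos rfl]
        nlinarith [key j j j, mul_nonneg (hx j) (hx j)]
      · rw [if_pos rfl, if_neg hjk, add_zero]
        calc p i j i * x i * x j ≤ x i * x j := key i j i
        _ = x j * x i := mul_comm _ _
    · by_cases hjk : j = k
      · subst hjk
        rw [if_neg hik, if_pos rfl, zero_add]
        exact key i j j
      · rw [hv i j k (Ne.symm hik) (Ne.symm hjk), if_neg hik, if_neg hjk]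
        simp
  calc qsoMap p x k ≤ ∑ i, ∑ j, ((if i = k then x j * x k else 0) + (if j = k then x i * x k else 0)) :=
        Finset.sum_le_sum fun i _ => Finset.sum_le_sum fun j _ => hb i j
  _ = 2 * x k := by
    simp_rw [Finset.sum_add_distrib]
    have h1 : (∑ i : Fin m, ∑ j : Fin m, (if i = k then x j * x k else 0)) = x k := by
      rw [Finset.sum_eq_single k (fun i _ hi => by simp [hi]) (by simp)]
      simp only [if_pos rfl, if_true]
      rw [← Finset.sum_mul, hxs, one_mul]
    have h2 : (∑ i : Fin m, ∑ j : Fin m, (if j = k then x i * x k else 0)) = x k := by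
      rw [Finset.sum_comm]
      rw [Finset.sum_eq_single k (fun j _ hj => by simp [hj]) (by simp)]
      simp only [if_pos rfl, if_true]
      rw [← Finset.sum_mul, hxs, one_mul]
    rw [h1, h2]; ring



lemma slln_ind {Ω : Type*} {mΩ : MeasurableSpace Ω} (μ : Measure Ω) [IsProbabilityMeasure μ]
    (ξ : ℕ → Ω → ℕ) (hξmeas : ∀ n, Measurable (ξ n))
    (hindep : iIndepFun ξ μ)
    (ν : ℕ → ℝ) (hν0 : ∀ j, 0 ≤ ν j)
    (hlaw : ∀ n j, μ {ω | ξ n ω = j} = ENNReal.ofReal (ν j)) (j₀ : ℕ) :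
    ∀ᵐ ω ∂μ, Tendsto (fun n : ℕ => (n : ℝ)⁻¹ *
      ∑ k ∈ Finset.range n, (if ξ k ω = j₀ then (1:ℝ) else 0)) atTop (𝓝 (ν j₀)) := by
  set g : ℕ → ℝ := fun t => if t = j₀ then 1 else 0 with hg
  have hgmeas : Measurable g := measurable_from_top
  set B : ℕ → Ω → ℝ := fun n ω => g (ξ n ω) with hB
  have hBset : ∀ n, MeasurableSet {ω | ξ n ω = j₀} :=
    fun n => hξmeas n (measurableSet_singleton j₀)
  have hBind : ∀ n, B n = Set.indicator {ω | ξ n ω = j₀} (1 : Ω → ℝ) := by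
    intro n; funext ω; by_cases h : ξ n ω = j₀ <;> simp [B, g, h, Set.indicator]
  have hint : Integrable (B 0) μ := by
    rw [hBind]
    exact (integrable_const (1:ℝ)).indicator (hBset 0)
  have hpair : Pairwise (Function.onFun (IndepFun · · μ) B) :=
    fun a b hab => (hindep.indepFun hab).comp hgmeas hgmeas
  have hident : ∀ n, IdentDistrib (B n) (B 0) μ μ := by
    intro n
    have hξid : IdentDistrib (ξ n) (ξ 0) μ μ :=
      ⟨(hξmeas n).aemeasurable, (hξmeas 0).aemeasurable, by
        refine MeasureTheory.Measure.ext_of_singleton fun a => ?_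
        rw [Measure.map_apply (hξmeas n) (measurableSet_singleton a),
            Measure.map_apply (hξmeas 0) (measurableSet_singleton a)]
        have h1 : ξ n ⁻¹' {a} = {ω | ξ n ω = a} := rfl
        have h2 : ξ 0 ⁻¹' {a} = {ω | ξ 0 ω = a} := rfl
        rw [h1, h2, hlaw, hlaw]⟩
    exact hξid.comp hgmeas
  have hmean : μ[B 0] = ν j₀ := by
    rw [hBind, MeasureTheory.integral_indicator_one (hBset 0), measureReal_def, hlaw,
      ENNReal.toReal_ofReal (hν0 j₀)]
  have h := strong_law_ae B hint hpair hident
  rw [hmean] at h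
  filter_upwards [h] with ω hω
  simpa [smul_eq_mul, B, g] using hω

/-- For the cut-off log-coordinate process `Y_n^i`, with
`D := min_{i ≤ m} (ν_i d - log 2) > 0`: for every `j`, conditionally on
`{Y_n^i ≤ -d for all i ≠ j, n ≥ 1}` (if it has positive probability), a.s.
`liminf -Y_n^i / n ≥ D` for all `i ≠ j`; and for every `θ > 0`, `b ∈ ℝ` there is
`s > 0` such that a.s. on `{X ∈ Ū_s}` one has
`ℙ(∃ j ∀ i ≠ j ∀ n ≥ 1 : Y_n^i < b | ℱ_0) ≥ 1 - θ`. -/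
theorem cutoff_log_process_convergence
    {Ω : Type*} {mΩ : MeasurableSpace Ω} (μ : Measure Ω) [IsProbabilityMeasure μ]
    (m : ℕ) (hm : 2 ≤ m)
    (p : ℕ → Fin m → Fin m → Fin m → ℝ)
    (hsymm : ∀ n i j l, p n i j l = p n j i l)
    (hnonneg : ∀ n i j l, 0 ≤ p n i j l)
    (hsum : ∀ n i j, ∑ l, p n i j l = 1)
    (hvol : ∀ n i j l, l ≠ i → l ≠ j → p n i j l = 0)
    (hsq : ∀ k : Fin m, ∀ x ∈ stdSimplex ℝ (Fin m), qsoMap (p (k : ℕ)) x k = x k ^ 2)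
    (ν : ℕ → ℝ) (hν0 : ∀ j, 0 ≤ ν j) (hν1 : ∑' j, ν j = 1)
    (hνpos : ∀ k : Fin m, 0 < ν (k : ℕ))
    (ξ : ℕ → Ω → ℕ) (hξmeas : ∀ n, Measurable (ξ n))
    (hindep : iIndepFun ξ μ)
    (hlaw : ∀ n j, μ {ω | ξ n ω = j} = ENNReal.ofReal (ν j))
    (X : Ω → Fin m → ℝ) (hXmeas : Measurable X)
    (hXsimplex : ∀ ω, X ω ∈ stdSimplex ℝ (Fin m) ∧ ∀ i, 0 < X ω i)
    (hXlog : ∀ i : Fin m, Integrable (fun ω => |Real.log (X ω i)|) μ)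
    (hXindep : IndepFun X (fun ω (n : ℕ) => ξ n ω) μ)
    (d : ℝ) (hd₁ : Real.log m < d) (hd₂ : ∀ i : Fin m, (1 / ν (i : ℕ)) * Real.log 2 < d)
    (F : ℕ → MeasurableSpace Ω)
    (hF : ∀ n, F n = MeasurableSpace.comap X inferInstance ⊔
        ⨆ l ∈ Finset.range n, MeasurableSpace.comap (ξ l) inferInstance)
    (Z : ℕ → Fin m → Ω → ℝ)
    (hZ : ∀ n i ω, Z n i ω =
      Real.log (((List.range n).foldl (fun y l => qsoMap (p (ξ l ω)) y) (X ω)) i))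
    (Y : ℕ → Fin m → Ω → ℝ)
    (hY0 : ∀ i ω, Y 0 i ω = Real.log (X ω i))
    (hYstep : ∀ n i ω, Y (n + 1) i ω = Y n i ω + max (Z (n + 1) i ω - Z n i ω) (-d)) :
    (0 < ⨅ i : Fin m, (ν (i : ℕ) * d - Real.log 2)) ∧
    (∀ j : Fin m,
      μ {ω | ∀ i : Fin m, i ≠ j → ∀ n : ℕ, 1 ≤ n → Y n i ω ≤ -d} ≠ 0 →
      ProbabilityTheory.cond μ {ω | ∀ i : Fin m, i ≠ j → ∀ n : ℕ, 1 ≤ n → Y n i ω ≤ -d}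
        {ω | ∀ i : Fin m, i ≠ j →
          (⨅ i' : Fin m, (ν (i' : ℕ) * d - Real.log 2)) ≤
            Filter.atTop.liminf (fun n : ℕ => -Y n i ω / n)} = 1) ∧
    (∀ θ : ℝ, 0 < θ → ∀ b : ℝ, ∃ s : ℝ, 0 < s ∧ ∀ᵐ ω ∂μ,
      (∃ j : Fin m, ∀ i : Fin m, i ≠ j → X ω i ≤ s) →
      1 - θ ≤ (μ[Set.indicator {ω' | ∃ j : Fin m, ∀ i : Fin m, i ≠ j →
          ∀ n : ℕ, 1 ≤ n → Y n i ω' < b} (fun _ => (1 : ℝ)) | F 0]) ω) := by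
  -- ====== basic positivity facts ======
  have hlog2pos : (0:ℝ) < Real.log 2 := Real.log_pos (by norm_num)
  have hlog2m : Real.log 2 ≤ Real.log m := by
    apply Real.log_le_log (by norm_num)
    exact_mod_cast hm
  have hdpos : 0 < d := lt_of_le_of_lt (le_of_lt hlog2pos) (lt_of_le_of_lt hlog2m hd₁)
  have hνle1 : ∀ i : Fin m, ν (i : ℕ) ≤ 1 := by
    intro i
    have hsummable : Summable ν := by
      by_contra h
      rw [tsum_eq_zero_of_not_summable h] at hν1
      norm_num at hν1
    calc ν (i:ℕ) ≤ ∑' j, ν j := Summable.le_tsum hsummable _ (fun j _ => hν0 j)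
    _ = 1 := hν1
  have hDpos : ∀ i : Fin m, 0 < ν (i : ℕ) * d - Real.log 2 := by
    intro i
    have h1 := hd₂ i
    have h2 := hνpos i
    rw [div_mul_eq_mul_div, one_mul, div_lt_iff₀ h2] at h1
    nlinarith
  have hmpos : 0 < m := lt_of_lt_of_le (by norm_num) hm
  haveI : Nonempty (Fin m) := ⟨⟨0, hmpos⟩⟩
  have hbdd : BddBelow (Set.range fun i : Fin m => ν (i : ℕ) * d - Real.log 2) :=
    (Set.finite_range _).bddBelow
  obtain ⟨i₀, hi₀⟩ := Finite.exists_min (fun i : Fin m => ν (i : ℕ) * d - Real.log 2)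
  have hDinf : 0 < ⨅ i : Fin m, (ν (i : ℕ) * d - Real.log 2) :=
    lt_of_lt_of_le (hDpos i₀) (le_ciInf hi₀)
  have hinf_le : ∀ i : Fin m, (⨅ i' : Fin m, (ν (i' : ℕ) * d - Real.log 2)) ≤
      ν (i : ℕ) * d - Real.log 2 := fun i => ciInf_le hbdd i
  -- ====== the state process W ======
  set W : ℕ → Ω → Fin m → ℝ :=
    fun n ω => (List.range n).foldl (fun y l => qsoMap (p (ξ l ω)) y) (X ω) with hWdef
  have hW0 : ∀ ω, W 0 ω = X ω := fun ω => by simp [hWdef]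
  have hWsucc : ∀ n ω, W (n + 1) ω = qsoMap (p (ξ n ω)) (W n ω) := by
    intro n ω
    simp [hWdef, List.range_succ]
  have hWmem : ∀ n ω, (∀ i, 0 < W n ω i) ∧ (∑ i, W n ω i = 1) := by
    intro n
    induction n with
    | zero =>
      intro ω
      exact ⟨(hXsimplex ω).2, ((hXsimplex ω).1).2⟩
    | succ n ih =>
      intro ω
      obtain ⟨hpos, hsum1⟩ := ih ω
      rw [hWsucc]
      constructor
      · intro i
        have := qso_sq_le (p (ξ n ω)) (hsum _) (hvol _) (hnonneg _)
          (fun i => (hpos i).le) i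
        exact lt_of_lt_of_le (pow_pos (hpos i) 2) this
      · exact qso_sum (p (ξ n ω)) (hsum _) hsum1
  have hWsimplex : ∀ n ω, W n ω ∈ stdSimplex ℝ (Fin m) :=
    fun n ω => ⟨fun i => ((hWmem n ω).1 i).le, (hWmem n ω).2⟩
  have hWmeas : ∀ n, Measurable (W n) := by
    intro n
    induction n with
    | zero =>
      have : W 0 = X := funext hW0
      rw [this]; exact hXmeas
    | succ n ih =>
      have : W (n + 1) = fun ω => qsoMap (p (ξ n ω)) (W n ω) := funext (hWsucc n)
      rw [this]
      apply measurable_pi_lambda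
      intro k
      apply Finset.measurable_sum
      intro i _
      apply Finset.measurable_sum
      intro j _
      have h1 : Measurable fun ω => p (ξ n ω) i j k :=
        (measurable_from_top (f := fun t : ℕ => p t i j k)).comp (hξmeas n)
      have h2 : Measurable fun ω => W n ω i := (measurable_pi_apply i).comp ih
      have h3 : Measurable fun ω => W n ω j := (measurable_pi_apply j).comp ih
      exact (h1.mul h2).mul h3
  -- ====== Z facts ======
  have hZW : ∀ n i ω, Z n i ω = Real.log (W n ω i) := hZ
  have hZmeas : ∀ n i, Measurable (Z n i) := by
    intro n i
    have : Z n i = fun ω => Real.log (W n ω i) := funext fun ω => hZW n i ω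
    rw [this]
    exact Real.measurable_log.comp ((measurable_pi_apply i).comp (hWmeas n))
  have hZdiff_le : ∀ n i ω, Z (n + 1) i ω - Z n i ω ≤ Real.log 2 := by
    intro n i ω
    rw [hZW, hZW]
    have hpos := (hWmem n ω).1 i
    have hle : W (n + 1) ω i ≤ 2 * W n ω i := by
      rw [hWsucc]
      exact qso_le_two (p (ξ n ω)) (hsum _) (hvol _) (hnonneg _)
        (fun i => ((hWmem n ω).1 i).le) (hWmem n ω).2 i
    have h1 : Real.log (W (n+1) ω i) ≤ Real.log (2 * W n ω i) :=
      Real.log_le_log ((hWmem (n+1) ω).1 i) hle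
    rw [Real.log_mul (by norm_num) (ne_of_gt hpos)] at h1
    linarith
  have hZsq : ∀ n (i : Fin m) ω, ξ n ω = (i : ℕ) → Z (n + 1) i ω = 2 * Z n i ω := by
    intro n i ω hξn
    rw [hZW, hZW]
    have : W (n + 1) ω i = (W n ω i) ^ 2 := by
      rw [hWsucc, hξn]
      exact hsq i (W n ω) (hWsimplex n ω)
    rw [this, Real.log_pow]
    norm_num
  have hZY : ∀ n i ω, Z n i ω ≤ Y n i ω := by
    intro n
    induction n with
    | zero =>
      intro i ω
      rw [hY0, hZW, hW0]
    | succ n ih =>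
      intro i ω
      rw [hYstep]
      have h1 : Z (n+1) i ω - Z n i ω ≤ max (Z (n+1) i ω - Z n i ω) (-d) := le_max_left _ _
      have h2 := ih i ω
      linarith
  have hYmeas : ∀ n i, Measurable (Y n i) := by
    intro n
    induction n with
    | zero =>
      intro i
      have : Y 0 i = fun ω => Real.log (X ω i) := funext fun ω => hY0 i ω
      rw [this]
      exact Real.measurable_log.comp ((measurable_pi_apply i).comp hXmeas)
    | succ n ih =>
      intro i
      have : Y (n+1) i = fun ω => Y n i ω + max (Z (n+1) i ω - Z n i ω) (-d) :=
        funext fun ω => hYstep n i ω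
      rw [this]
      exact (ih i).add (((hZmeas (n+1) i).sub (hZmeas n i)).max measurable_const)
  -- increment bounds
  have hIncLe : ∀ n i ω, Y (n + 1) i ω ≤ Y n i ω + Real.log 2 := by
    intro n i ω
    rw [hYstep]
    apply add_le_add (le_refl _)
    exact max_le (hZdiff_le n i ω) (by linarith)
  have hIncEq : ∀ n (i : Fin m) ω, ξ n ω = (i : ℕ) → Y n i ω ≤ -d →
      Y (n + 1) i ω = Y n i ω - d := by
    intro n i ω hξn hYn
    rw [hYstep]
    have hdiff : Z (n+1) i ω - Z n i ω = Z n i ω := by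
      rw [hZsq n i ω hξn]; ring
    rw [hdiff, max_eq_right (le_trans (le_trans (hZY n i ω) hYn) (le_refl _))]
    ring
  -- lower bound on increments : Y n ≥ Y 0 - n d
  have hIncGe : ∀ n i ω, Y n i ω ≥ Y 0 i ω - n * d := by
    intro n
    induction n with
    | zero => intro i ω; simp
    | succ n ih =>
      intro i ω
      rw [hYstep]
      have h1 : max (Z (n+1) i ω - Z n i ω) (-d) ≥ -d := le_max_right _ _
      have h2 := ih i ω
      push_cast
      nlinarith [hdpos]
  refine ⟨hDinf, ?_, ?_⟩
  · -- Part 2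
    intro j hEne
    set E := {ω | ∀ i : Fin m, i ≠ j → ∀ n : ℕ, 1 ≤ n → Y n i ω ≤ -d} with hEdef
    set A := {ω | ∀ i : Fin m, i ≠ j →
        (⨅ i' : Fin m, (ν (i' : ℕ) * d - Real.log 2)) ≤
          Filter.atTop.liminf (fun n : ℕ => -Y n i ω / n)} with hAdef
    have hEmeas : MeasurableSet E := by
      have hE2 : E = ⋂ (i : Fin m), ⋂ (_ : i ≠ j), ⋂ (n : ℕ), ⋂ (_ : 1 ≤ n),
          {ω | Y n i ω ≤ -d} := by
        ext ω; simp [hEdef]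
      rw [hE2]
      refine MeasurableSet.iInter fun i => MeasurableSet.iInter fun _ =>
        MeasurableSet.iInter fun n => MeasurableSet.iInter fun _ => ?_
      exact measurableSet_le (hYmeas n i) measurable_const
    have hCae : ∀ᵐ ω ∂μ, ∀ i : Fin m, Tendsto (fun n : ℕ => (n : ℝ)⁻¹ *
        ∑ k ∈ Finset.range n, (if ξ k ω = (i:ℕ) then (1:ℝ) else 0)) atTop (𝓝 (ν (i:ℕ))) :=
      (ae_all_iff).2 fun i => slln_ind μ ξ hξmeas hindep ν hν0 hlaw (i : ℕ)
    have hkey : ∀ ω ∈ E, (∀ i : Fin m, Tendsto (fun n : ℕ => (n : ℝ)⁻¹ *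
        ∑ k ∈ Finset.range n, (if ξ k ω = (i:ℕ) then (1:ℝ) else 0)) atTop (𝓝 (ν (i:ℕ)))) →
        ω ∈ A := by
      intro ω hωE hωC
      simp only [hAdef, Set.mem_setOf_eq]
      intro i hij
      simp only [hEdef, Set.mem_setOf_eq] at hωE
      set c : ℕ → ℝ := fun t => if t = (i : ℕ) then -d else Real.log 2 with hcdef
      have hchain : ∀ n : ℕ, 1 ≤ n →
          Y n i ω ≤ Y 1 i ω + ∑ k ∈ Finset.Ico 1 n, c (ξ k ω) := by
        intro n hn
        induction n, hn using Nat.le_induction with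
        | base => simp
        | succ n hn ih =>
          have hstep : Y (n + 1) i ω ≤ Y n i ω + c (ξ n ω) := by
            by_cases h : ξ n ω = (i : ℕ)
            · rw [hIncEq n i ω h (hωE i hij n hn), hcdef]
              simp [h]
            · have : c (ξ n ω) = Real.log 2 := by rw [hcdef]; simp [h]
              rw [this]
              exact hIncLe n i ω
          calc Y (n + 1) i ω ≤ Y n i ω + c (ξ n ω) := hstep
          _ ≤ (Y 1 i ω + ∑ k ∈ Finset.Ico 1 n, c (ξ k ω)) + c (ξ n ω) := by linarith
          _ = Y 1 i ω + ∑ k ∈ Finset.Ico 1 (n+1), c (ξ k ω) := by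
            rw [Finset.sum_Ico_succ_top hn]; ring
      set L : ℝ := Real.log 2 - (d + Real.log 2) * ν (i : ℕ) with hLdef
      have hcform : ∀ t : ℕ, c t = Real.log 2 -
          (d + Real.log 2) * (if t = (i:ℕ) then (1:ℝ) else 0) := by
        intro t; by_cases h : t = (i:ℕ) <;> simp [hcdef, h] <;> ring
      have hT : Tendsto (fun n : ℕ => (n : ℝ)⁻¹ * ∑ k ∈ Finset.range n, c (ξ k ω))
          atTop (𝓝 L) := by
        have heq : ∀ᶠ n : ℕ in atTop, Real.log 2 - (d + Real.log 2) *
            ((n : ℝ)⁻¹ * ∑ k ∈ Finset.range n, (if ξ k ω = (i:ℕ) then (1:ℝ) else 0))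
            = (n : ℝ)⁻¹ * ∑ k ∈ Finset.range n, c (ξ k ω) := by
          filter_upwards [eventually_ge_atTop 1] with n hn
          have hn0 : (n : ℝ) ≠ 0 := Nat.cast_ne_zero.2 (by omega)
          have hsc : ∑ k ∈ Finset.range n, c (ξ k ω)
              = n * Real.log 2 - (d + Real.log 2) *
                ∑ k ∈ Finset.range n, (if ξ k ω = (i:ℕ) then (1:ℝ) else 0) := by
            simp_rw [hcform]
            rw [Finset.sum_sub_distrib, Finset.sum_const, Finset.card_range, ← Finset.mul_sum]
            simp [nsmul_eq_mul]
          rw [hsc]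
          field_simp
        exact Tendsto.congr' heq (tendsto_const_nhds.sub (tendsto_const_nhds.mul (hωC i)))
      have hT2 : Tendsto (fun n : ℕ => (Y 1 i ω + ∑ k ∈ Finset.Ico 1 n, c (ξ k ω)) / n)
          atTop (𝓝 L) := by
        have heq : ∀ᶠ n : ℕ in atTop, (Y 1 i ω - c (ξ 0 ω)) * (n:ℝ)⁻¹ +
            (n : ℝ)⁻¹ * ∑ k ∈ Finset.range n, c (ξ k ω)
            = (Y 1 i ω + ∑ k ∈ Finset.Ico 1 n, c (ξ k ω)) / n := by
          filter_upwards [eventually_ge_atTop 1] with n hn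
          have hn0 : (n : ℝ) ≠ 0 := Nat.cast_ne_zero.2 (by omega)
          rw [Finset.sum_Ico_eq_sub _ hn, Finset.sum_range_one]
          field_simp
          ring
        have h0 : Tendsto (fun n : ℕ => (Y 1 i ω - c (ξ 0 ω)) * (n:ℝ)⁻¹) atTop (𝓝 0) := by
          simpa using tendsto_const_nhds.mul (tendsto_inv_atTop_nhds_zero_nat : Tendsto (fun n : ℕ => (n:ℝ)⁻¹) atTop (𝓝 0))
        simpa using Tendsto.congr' heq (h0.add hT)
      have hLD : (⨅ i' : Fin m, (ν (i' : ℕ) * d - Real.log 2)) ≤ -L := by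
        have h1 := hinf_le i
        have h2 := hνpos i
        rw [hLdef]
        nlinarith [hlog2pos]
      have hub : ∀ᶠ n : ℕ in atTop, -Y n i ω / n ≤ |Y 0 i ω| + d := by
        filter_upwards [eventually_ge_atTop 1] with n hn
        have hn0 : (0:ℝ) < n := by exact_mod_cast hn
        have h1 := hIncGe n i ω
        rw [div_le_iff₀ hn0]
        have h2 : -Y 0 i ω ≤ |Y 0 i ω| := neg_le_abs _
        have hn1 : (1:ℝ) ≤ n := by exact_mod_cast hn
        nlinarith [abs_nonneg (Y 0 i ω)]
      have hcob : IsCoboundedUnder (· ≥ ·) atTop (fun n : ℕ => -Y n i ω / n) :=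
        isCoboundedUnder_ge_of_eventually_le atTop hub
      refine le_of_forall_sub_le fun ε hε => ?_
      refine le_liminf_of_le hcob ?_
      have hev : ∀ᶠ n : ℕ in atTop,
          -L - ε < -((Y 1 i ω + ∑ k ∈ Finset.Ico 1 n, c (ξ k ω)) / n) :=
        hT2.neg.eventually_const_lt (by linarith)
      filter_upwards [hev, eventually_ge_atTop 1] with n hn1 hn2
      have hn0 : (0:ℝ) < n := by exact_mod_cast hn2
      have hch := hchain n hn2
      have hdiv : -(Y 1 i ω + ∑ k ∈ Finset.Ico 1 n, c (ξ k ω)) / n ≤ -Y n i ω / n :=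
        (div_le_div_iff_of_pos_right hn0).2 (by linarith)
      rw [neg_div] at hdiv
      linarith
    have hEA : ∀ᵐ ω ∂μ, ω ∈ E → ω ∈ A := by
      filter_upwards [hCae] with ω hωC hωE
      exact hkey ω hωE hωC
    have hmeq : μ (E ∩ A) = μ E := by
      have hae : (E ∩ A : Set Ω) =ᵐ[μ] E := by
        rw [eventuallyEq_set]
        filter_upwards [hEA] with ω h
        exact ⟨fun hh => hh.1, fun hh => ⟨hh, h hh⟩⟩
      exact measure_congr hae
    rw [ProbabilityTheory.cond_apply hEmeas, hmeq]
    exact ENNReal.inv_mul_cancel hEne (measure_ne_top μ E)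
  · -- Part 3
    intro θ hθ b
    set c : Fin m → ℕ → ℝ := fun i t => if t = (i : ℕ) then -d else Real.log 2 with hcdef
    set S : ℕ → Fin m → Ω → ℝ := fun n i ω => ∑ k ∈ Finset.range n, c i (ξ k ω) with hSdef
    have hSmeas : ∀ n i, Measurable (S n i) := by
      intro n i
      apply Finset.measurable_sum
      intro k _
      exact (measurable_from_top (f := c i)).comp (hξmeas k)
    have hCae : ∀ᵐ ω ∂μ, ∃ a : ℕ, ∀ (i : Fin m) (n : ℕ), S n i ω ≤ a := by
      have hall : ∀ᵐ ω ∂μ, ∀ i : Fin m, Tendsto (fun n : ℕ => (n : ℝ)⁻¹ *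
          ∑ k ∈ Finset.range n, (if ξ k ω = (i:ℕ) then (1:ℝ) else 0)) atTop (𝓝 (ν (i:ℕ))) :=
        (ae_all_iff).2 fun i => slln_ind μ ξ hξmeas hindep ν hν0 hlaw (i : ℕ)
      filter_upwards [hall] with ω hωC
      have hBdd : ∀ i : Fin m, ∃ M : ℝ, ∀ n : ℕ, S n i ω ≤ M := by
        intro i
        set L : ℝ := Real.log 2 - (d + Real.log 2) * ν (i : ℕ) with hLdef
        have hLneg : L < 0 := by
          have h1 := hDpos i
          have h2 := hνpos i
          rw [hLdef]; nlinarith [hlog2pos]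
        have hcform : ∀ t : ℕ, c i t = Real.log 2 -
            (d + Real.log 2) * (if t = (i:ℕ) then (1:ℝ) else 0) := by
          intro t; by_cases h : t = (i:ℕ) <;> simp [hcdef, h] <;> ring
        have hT : Tendsto (fun n : ℕ => (n : ℝ)⁻¹ * S n i ω) atTop (𝓝 L) := by
          have heq : ∀ᶠ n : ℕ in atTop, Real.log 2 - (d + Real.log 2) *
              ((n : ℝ)⁻¹ * ∑ k ∈ Finset.range n, (if ξ k ω = (i:ℕ) then (1:ℝ) else 0))
              = (n : ℝ)⁻¹ * S n i ω := by
            filter_upwards [eventually_ge_atTop 1] with n hn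
            have hn0 : (n : ℝ) ≠ 0 := Nat.cast_ne_zero.2 (by omega)
            have hsc : S n i ω
                = n * Real.log 2 - (d + Real.log 2) *
                  ∑ k ∈ Finset.range n, (if ξ k ω = (i:ℕ) then (1:ℝ) else 0) := by
              rw [hSdef]
              simp_rw [hcform]
              rw [Finset.sum_sub_distrib, Finset.sum_const, Finset.card_range, ← Finset.mul_sum]
              simp [nsmul_eq_mul]
            rw [hsc]
            field_simp
          exact Tendsto.congr' heq (tendsto_const_nhds.sub (tendsto_const_nhds.mul (hωC i)))
        have hev : ∀ᶠ n : ℕ in atTop, (n:ℝ)⁻¹ * S n i ω < 0 :=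
          hT.eventually_lt_const hLneg
        obtain ⟨N, hN⟩ := eventually_atTop.1 hev
        refine ⟨max ((N:ℝ) * Real.log 2) 0, fun n => ?_⟩
        rcases Nat.eq_zero_or_pos n with hn0 | hn0
        · subst hn0
          simpa [hSdef] using le_max_right ((N:ℝ) * Real.log 2) 0
        · rcases le_or_gt N n with hNn | hNn
          · have h1 := hN n hNn
            have hnpos : (0:ℝ) < n := by exact_mod_cast hn0
            have h2 : S n i ω < 0 := by
              by_contra h
              push_neg at h
              nlinarith [inv_pos.2 hnpos]
            exact le_trans h2.le (le_max_right _ _)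
          · have hSle : S n i ω ≤ (n : ℝ) * Real.log 2 := by
              rw [hSdef]
              calc ∑ k ∈ Finset.range n, c i (ξ k ω)
                  ≤ ∑ _k ∈ Finset.range n, Real.log 2 := by
                    apply Finset.sum_le_sum
                    intro k _
                    by_cases h : ξ k ω = (i:ℕ) <;> simp [hcdef, h] <;> linarith
                _ = (n : ℝ) * Real.log 2 := by
                    rw [Finset.sum_const, Finset.card_range, nsmul_eq_mul]
            have hcast : (n : ℝ) ≤ (N : ℝ) := by exact_mod_cast hNn.le
            have : S n i ω ≤ (N:ℝ) * Real.log 2 :=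
              le_trans hSle (mul_le_mul_of_nonneg_right hcast hlog2pos.le)
            exact le_trans this (le_max_left _ _)
      -- combine over i
      choose M hM using hBdd
      obtain ⟨Mtot, hMtot⟩ := Finite.exists_max M
      obtain ⟨a, ha⟩ := exists_nat_ge (M Mtot)
      exact ⟨a, fun i n => le_trans (hM i n) (le_trans (hMtot i) ha)⟩
    set K : ℕ → Set Ω := fun a => {ω | ∀ (i : Fin m) (n : ℕ), S n i ω ≤ a} with hKdef
    have hKmeas : ∀ a, MeasurableSet (K a) := by
      intro a
      have hKi : K a = ⋂ (i : Fin m), ⋂ (n : ℕ), {ω | S n i ω ≤ a} := by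
        ext ω; simp [hKdef]
      rw [hKi]
      exact MeasurableSet.iInter fun i => MeasurableSet.iInter fun n =>
        measurableSet_le (hSmeas n i) measurable_const
    have hKanti : Antitone fun a : ℕ => (K a)ᶜ := by
      intro a a' haa'
      apply Set.compl_subset_compl.2
      intro ω hω i n
      exact le_trans (hω i n) (by exact_mod_cast haa')
    have hIntEmpty : μ (⋂ a : ℕ, (K a)ᶜ) = 0 := by
      have hsub : (⋂ a : ℕ, (K a)ᶜ) ⊆ {ω | ¬ ∃ a : ℕ, ∀ (i : Fin m) (n : ℕ), S n i ω ≤ a} := by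
        intro ω hω
        simp only [Set.mem_setOf_eq, not_exists]
        intro a ha
        exact (Set.mem_iInter.1 hω a) ha
      exact measure_mono_null hsub (ae_iff.1 hCae)
    have htend : Tendsto (fun a : ℕ => μ ((K a)ᶜ)) atTop (𝓝 0) := by
      have h := tendsto_measure_iInter_atTop
        (fun a => ((hKmeas a).compl).nullMeasurableSet) hKanti ⟨0, measure_ne_top μ _⟩
      rw [hIntEmpty] at h
      exact h
    have hlt : ∀ᶠ a : ℕ in atTop, μ ((K a)ᶜ) < ENNReal.ofReal θ :=
      (tendsto_order.1 htend).2 _ (ENNReal.ofReal_pos.2 hθ)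
    obtain ⟨a₀, ha₀⟩ := hlt.exists
    refine ⟨Real.exp (min (-d) (b - 1) - a₀), Real.exp_pos _, ?_⟩
    set s : ℝ := Real.exp (min (-d) (b - 1) - a₀) with hsdef
    have hlogs : Real.log s = min (-d) (b - 1) - a₀ := Real.log_exp _
    set G := {ω' | ∃ j : Fin m, ∀ i : Fin m, i ≠ j →
        ∀ n : ℕ, 1 ≤ n → Y n i ω' < b} with hGdef
    set Aset := {ω | ∃ j : Fin m, ∀ i : Fin m, i ≠ j → X ω i ≤ s} with hAdef
    have htrap : Aset ∩ K a₀ ⊆ G := by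
      rintro ω ⟨hA, hK⟩
      obtain ⟨j, hj⟩ := hA
      refine ⟨j, fun i hij n hn => ?_⟩
      have hind : ∀ n : ℕ, Y n i ω ≤ Real.log s + S n i ω := by
        intro n
        induction n with
        | zero =>
          rw [hY0]
          have h1 : Real.log (X ω i) ≤ Real.log s :=
            Real.log_le_log ((hXsimplex ω).2 i) (hj i hij)
          simpa [hSdef] using h1
        | succ n ih =>
          have hbound : Real.log s + S n i ω ≤ min (-d) (b-1) := by
            have := hK i n
            rw [hlogs]; linarith
          by_cases h : ξ n ω = (i:ℕ)
          · have hYn : Y n i ω ≤ -d :=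
              le_trans ih (le_trans hbound (min_le_left _ _))
            rw [hIncEq n i ω h hYn]
            have hS1 : S (n+1) i ω = S n i ω + (-d) := by
              simp only [hSdef]
              rw [Finset.sum_range_succ]
              simp [hcdef, h]
            rw [hS1]
            linarith
          · have h1 := hIncLe n i ω
            have hS1 : S (n+1) i ω = S n i ω + Real.log 2 := by
              simp only [hSdef]
              rw [Finset.sum_range_succ]
              simp [hcdef, h]
            rw [hS1]
            linarith
      have h2 : Real.log s + S n i ω ≤ min (-d) (b-1) := by
        have := hK i n
        rw [hlogs]; linarith
      have h3 := le_trans (hind n) (le_trans h2 (min_le_right _ _))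
      linarith
    have hGmeas : MeasurableSet G := by
      have hGi : G = ⋃ (j : Fin m), ⋂ (i : Fin m), ⋂ (_ : i ≠ j), ⋂ (n : ℕ),
          ⋂ (_ : 1 ≤ n), {ω | Y n i ω < b} := by
        ext ω; simp [hGdef]
      rw [hGi]
      exact MeasurableSet.iUnion fun j => MeasurableSet.iInter fun i =>
        MeasurableSet.iInter fun _ => MeasurableSet.iInter fun n =>
        MeasurableSet.iInter fun _ => measurableSet_lt (hYmeas n i) measurable_const
    have hF0 : F 0 = MeasurableSpace.comap X inferInstance := by
      rw [hF 0]; simp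
    have hF0le : F 0 ≤ mΩ := by
      rw [hF0]; exact hXmeas.comap_le
    haveI : SigmaFinite (μ.trim hF0le) := by
      haveI : IsFiniteMeasure (μ.trim hF0le) := by infer_instance
      infer_instance
    have hAsetF0 : MeasurableSet[F 0] Aset := by
      rw [hF0]
      refine ⟨{x : Fin m → ℝ | ∃ j : Fin m, ∀ i : Fin m, i ≠ j → x i ≤ s}, ?_, rfl⟩
      have hU : {x : Fin m → ℝ | ∃ j : Fin m, ∀ i : Fin m, i ≠ j → x i ≤ s}
          = ⋃ (j : Fin m), ⋂ (i : Fin m), ⋂ (_ : i ≠ j), {x : Fin m → ℝ | x i ≤ s} := by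
        ext x; simp
      rw [hU]
      exact MeasurableSet.iUnion fun j => MeasurableSet.iInter fun i =>
        MeasurableSet.iInter fun _ => measurableSet_le (measurable_pi_apply i) measurable_const
    set T : Ω → ℕ → ℕ := fun ω n => ξ n ω with hTdef
    have hTmeas : Measurable T := measurable_pi_lambda _ hξmeas
    have hmΞle : MeasurableSpace.comap T inferInstance ≤ mΩ := hTmeas.comap_le
    have hKmΞ : MeasurableSet[MeasurableSpace.comap T inferInstance] (K a₀) := by
      refine ⟨{f : ℕ → ℕ | ∀ (i : Fin m) (n : ℕ),
        (∑ k ∈ Finset.range n, c i (f k)) ≤ a₀}, ?_, rfl⟩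
      have hU : {f : ℕ → ℕ | ∀ (i : Fin m) (n : ℕ), (∑ k ∈ Finset.range n, c i (f k)) ≤ a₀}
          = ⋂ (i : Fin m), ⋂ (n : ℕ), {f : ℕ → ℕ | (∑ k ∈ Finset.range n, c i (f k)) ≤ a₀} := by
        ext f; simp
      rw [hU]
      refine MeasurableSet.iInter fun i => MeasurableSet.iInter fun n =>
        measurableSet_le ?_ measurable_const
      exact Finset.measurable_sum _ fun k _ =>
        (measurable_from_top (f := c i)).comp (measurable_pi_apply k)
    have hIndep : Indep (MeasurableSpace.comap T inferInstance) (F 0) μ := by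
      rw [hF0]
      exact ((IndepFun_iff_Indep X T μ).1 hXindep).symm
    have hIntK : Integrable (Set.indicator (K a₀) (fun _ => (1:ℝ))) μ :=
      (integrable_const (1:ℝ)).indicator (hKmeas a₀)
    have hIntG : Integrable (Set.indicator G (fun _ => (1:ℝ))) μ :=
      (integrable_const (1:ℝ)).indicator hGmeas
    have hIntAK : Integrable (Set.indicator (Aset ∩ K a₀) (fun _ => (1:ℝ))) μ :=
      (integrable_const (1:ℝ)).indicator ((hF0le _ hAsetF0).inter (hKmeas a₀))
    have hmono : μ[Set.indicator (Aset ∩ K a₀) (fun _ => (1:ℝ)) | F 0] ≤ᵐ[μ]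
        μ[Set.indicator G (fun _ => (1:ℝ)) | F 0] :=
      condExp_mono hIntAK hIntG (Eventually.of_forall fun x =>
        Set.indicator_le_indicator_of_subset htrap (fun _ => zero_le_one) x)
    have hsplit : Set.indicator (Aset ∩ K a₀) (fun _ => (1:ℝ))
        = Set.indicator Aset (Set.indicator (K a₀) (fun _ => (1:ℝ))) :=
      (Set.indicator_indicator _ _ _).symm
    have hcondAK : μ[Set.indicator (Aset ∩ K a₀) (fun _ => (1:ℝ)) | F 0] =ᵐ[μ]
        Set.indicator Aset (μ[Set.indicator (K a₀) (fun _ => (1:ℝ)) | F 0]) := by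
      rw [hsplit]
      exact condExp_indicator hIntK hAsetF0
    have hcondK : μ[Set.indicator (K a₀) (fun _ => (1:ℝ)) | F 0] =ᵐ[μ]
        fun _ => (μ (K a₀)).toReal := by
      have h1 : StronglyMeasurable[MeasurableSpace.comap T inferInstance]
          (Set.indicator (K a₀) (fun _ => (1:ℝ))) :=
        stronglyMeasurable_const.indicator hKmΞ
      have h2 := condExp_indep_eq hmΞle hF0le h1 hIndep
      have h3 : μ[Set.indicator (K a₀) (fun _ => (1:ℝ))] = (μ (K a₀)).toReal := by
        simpa [measureReal_def, Pi.one_def] using integral_indicator_one (μ := μ) (hKmeas a₀)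
      rw [h3] at h2
      exact h2
    have hKbig : 1 - θ ≤ (μ (K a₀)).toReal := by
      have hc : (μ ((K a₀)ᶜ)).toReal ≤ θ := by
        have h := (ENNReal.toReal_le_toReal (measure_ne_top _ _) ENNReal.ofReal_ne_top).2 ha₀.le
        rwa [ENNReal.toReal_ofReal hθ.le] at h
      have hadd : μ (K a₀) + μ ((K a₀)ᶜ) = 1 := by
        rw [measure_add_measure_compl (hKmeas a₀), measure_univ]
      have htr : (μ (K a₀)).toReal + (μ ((K a₀)ᶜ)).toReal = 1 := by
        rw [← ENNReal.toReal_add (measure_ne_top _ _) (measure_ne_top _ _), hadd]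
        simp
      linarith
    filter_upwards [hmono, hcondAK, hcondK] with ω h1 h2 h3 hprem
    have hωA : ω ∈ Aset := hprem
    have e1 : Set.indicator Aset (μ[Set.indicator (K a₀) (fun _ => (1:ℝ)) | F 0]) ω
        = (μ (K a₀)).toReal := by
      rw [Set.indicator_of_mem hωA, h3]
    calc 1 - θ ≤ (μ (K a₀)).toReal := hKbig
    _ = (μ[Set.indicator (Aset ∩ K a₀) (fun _ => (1:ℝ)) | F 0]) ω := by rw [h2, e1]
    _ ≤ (μ[Set.indicator G (fun _ => (1:ℝ)) | F 0]) ω := h1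
end

section
/- In the setting of the main theorem (i.i.d. operators (T_n) from a countable set 𝒱 of Volterra QSOs containing, for each k ∈ {1,…,m}, an operator V_k with (V_k x)_k = x_k^2, with ℙ(T_n = V_j) = ν_j > 0 for j ≤ m): for every ε > 0 and every x ∈ S^{m-1}, the probabilities ℙ((T_n ∘ ⋯ ∘ T_1)(x) ∉ U_ε) decay fast enough to be summable, i.e. ∑_{n=1}^∞ ℙ((T_n ∘ ⋯ ∘ T_1)(x) ∈ S^{m-1} \ U_ε) < ∞. -/
open MeasureTheory ProbabilityTheory

open Finset

namespace RVQSO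

noncomputable section

/-- cap level index -/
def Kc (v : ℝ) : ℕ := ⌈(8:ℝ)/v⌉₊ + 2
/-- growth ratio -/
def cc (v : ℝ) : ℝ := 4*(1-v)/v
/-- cap value -/
def Ll (v : ℝ) : ℝ := v/8
/-- increments -/
def lam (v : ℝ) (i : ℕ) : ℝ := if i ≤ 1 then 0 else min (Ll v) (Ll v * cc v ^ i / cc v ^ Kc v)
/-- partial sums -/
def Ss (v : ℝ) (k : ℕ) : ℝ := ∑ i ∈ Finset.range k, lam v (i+1)
/-- the Lyapunov sequence -/
def aa (v : ℝ) (k : ℕ) : ℝ := Real.exp (-(Ss v k))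
/-- contraction ratio -/
def rr (v : ℝ) : ℝ := 1 - v * lam v 2 / 2
/-- gain index -/
def Mg (k : ℕ) : ℕ := max (2*k-1) (k+1)

variable {v : ℝ} (hv : 0 < v) (hv8 : v ≤ 1/8)

lemma Mg_ge (k : ℕ) : k + 1 ≤ Mg k := le_max_right _ _

lemma Mg_eq {k : ℕ} (hk : 2 ≤ k) : Mg k = 2*k - 1 := by
  rw [Mg]; omega

lemma exp_le_quad {x : ℝ} (h1 : 0 ≤ x) (h2 : x ≤ 1) : Real.exp x ≤ 1 + x + x^2 := by
  have h := Real.exp_bound' h1 h2 (n := 2) (by norm_num)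
  have hs : (∑ m ∈ Finset.range 2, x ^ m / m.factorial) = 1 + x := by
    simp [Finset.sum_range_succ]
  rw [hs] at h
  have hfac : ((Nat.factorial 2 : ℕ) : ℝ) = 2 := by norm_num [Nat.factorial]
  rw [hfac] at h
  norm_num at h
  nlinarith

lemma exp_neg_le_inv {y : ℝ} (hy : 0 ≤ y) : Real.exp (-y) ≤ 1/(1+y) := by
  rw [Real.exp_neg]
  have h1 : 1 + y ≤ Real.exp y := by linarith [Real.add_one_le_exp y]
  have h2 : 0 < 1 + y := by linarith
  rw [inv_eq_one_div]
  exact one_div_le_one_div_of_le h2 h1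

section
include hv hv8

lemma cc_ge_two : 2 ≤ cc v := by
  rw [cc, le_div_iff₀ hv]; nlinarith

lemma cc_pos : 0 < cc v := lt_of_lt_of_le (by norm_num) (cc_ge_two hv hv8)

lemma Ll_pos : 0 < Ll v := by rw [Ll]; linarith

lemma Ll_le : Ll v ≤ 1/64 := by rw [Ll]; linarith

lemma lam_nonneg (i : ℕ) : 0 ≤ lam v i := by
  have h1 := Ll_pos hv hv8
  have h2 := cc_pos hv hv8
  rw [lam]; split
  · exact le_refl 0
  · exact le_min h1.le
      (div_nonneg (mul_nonneg h1.le (pow_nonneg h2.le _)) (pow_nonneg h2.le _))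


lemma lam_le_Ll (i : ℕ) : lam v i ≤ Ll v := by
  rw [lam]; split
  · exact le_of_lt (Ll_pos hv hv8)
  · exact min_le_left _ _

lemma lam_le_one (i : ℕ) : lam v i ≤ 1 :=
  (lam_le_Ll hv hv8 i).trans ((Ll_le hv hv8).trans (by norm_num))

lemma lam_mono : Monotone (lam v) := by
  intro i j hij
  rcases le_or_gt j 1 with hj | hj
  · have hi : i ≤ 1 := hij.trans hj
    simp [lam, hi, hj]
  · rcases le_or_gt i 1 with hi | hi
    · have h1 := Ll_pos hv hv8
      have h2 := cc_pos hv hv8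
      rw [lam, if_pos hi, lam, if_neg (by omega)]
      exact le_min h1.le
        (div_nonneg (mul_nonneg h1.le (pow_nonneg h2.le _)) (pow_nonneg h2.le _))
    · have h1 := Ll_pos hv hv8
      have h2 := cc_pos hv hv8
      rw [lam, if_neg (by omega), lam, if_neg (by omega)]
      apply min_le_min le_rfl
      have hc1 : 1 ≤ cc v := by linarith [cc_ge_two hv hv8]
      gcongr

lemma lam_eq_cap {i : ℕ} (hi : Kc v ≤ i) : lam v i = Ll v := by
  have hcp := cc_pos hv hv8
  have hKc2 : 2 ≤ Kc v := by rw [Kc]; omega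
  have h2 : ¬ (i ≤ 1) := by omega
  rw [lam, if_neg h2, min_eq_left]
  rw [le_div_iff₀ (by positivity)]
  have : cc v ^ Kc v ≤ cc v ^ i :=
    pow_le_pow_right₀ (by linarith [cc_ge_two hv hv8]) hi
  nlinarith [Ll_pos hv hv8, pow_pos hcp (Kc v), pow_pos hcp i]

lemma lam_succ_eq {i : ℕ} (h2 : 2 ≤ i) (hK : i + 1 ≤ Kc v) :
    lam v (i+1) = cc v * lam v i := by
  have hcap : ∀ j, 2 ≤ j → j ≤ Kc v → lam v j = Ll v * cc v ^ j / cc v ^ Kc v := by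
    intro j hj hjK
    have hcp := cc_pos hv hv8
    rw [lam, if_neg (by omega), min_eq_right]
    rw [div_le_iff₀ (by positivity)]
    have : cc v ^ j ≤ cc v ^ Kc v :=
      pow_le_pow_right₀ (by linarith [cc_ge_two hv hv8]) hjK
    nlinarith [Ll_pos hv hv8, pow_pos hcp j, pow_pos hcp (Kc v)]
  rw [hcap _ (by omega) hK, hcap _ h2 (by omega), pow_succ]
  ring

lemma lam_two_pos : 0 < lam v 2 := by
  rw [lam, if_neg (by norm_num)]
  have := Ll_pos hv hv8
  have := cc_pos hv hv8
  positivity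


lemma lam_two_le_one : lam v 2 ≤ 1 := lam_le_one hv hv8 2

lemma Ss_nonneg (k : ℕ) : 0 ≤ Ss v k :=
  Finset.sum_nonneg fun i _ => lam_nonneg hv hv8 _

lemma Ss_mono : Monotone (Ss v) := by
  intro i j hij
  exact Finset.sum_le_sum_of_subset_of_nonneg (Finset.range_subset_range.2 hij)
    (fun i _ _ => lam_nonneg hv hv8 _)

lemma aa_pos (k : ℕ) : 0 < aa v k := Real.exp_pos _

lemma aa_le_one (k : ℕ) : aa v k ≤ 1 := by
  rw [aa, Real.exp_le_one_iff]
  simpa using Ss_nonneg hv hv8 k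

lemma aa_antitone : Antitone (aa v) := by
  intro i j hij
  exact Real.exp_le_exp.2 (neg_le_neg (Ss_mono hv hv8 hij))

lemma Ss_succ (k : ℕ) : Ss v (k+1) = Ss v k + lam v (k+1) := Finset.sum_range_succ _ _

lemma aa_pred (k : ℕ) : aa v k = Real.exp (lam v (k+1)) * aa v (k+1) := by
  rw [aa, aa, ← Real.exp_add, Ss_succ hv hv8]
  ring_nf

/-- gap between `Ss (Mg k)` and `Ss k` -/
lemma aa_Mg (k : ℕ) :
    aa v (Mg k) = Real.exp (-(Ss v (Mg k) - Ss v k)) * aa v k := by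
  rw [aa, aa, ← Real.exp_add]; ring_nf

lemma gap_eq_sum (k : ℕ) :
    Ss v (Mg k) - Ss v k = ∑ i ∈ Finset.Ico k (Mg k), lam v (i+1) := by
  rw [Ss, Ss, ← Finset.sum_Ico_eq_sub _ (le_trans (Nat.le_succ k) (Mg_ge k))]

lemma gap_nonneg (k : ℕ) : 0 ≤ Ss v (Mg k) - Ss v k := by
  rw [gap_eq_sum hv hv8]
  exact Finset.sum_nonneg fun i _ => lam_nonneg hv hv8 _

lemma gap_ge_lam_succ (k : ℕ) : lam v (k+1) ≤ Ss v (Mg k) - Ss v k := by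
  rw [gap_eq_sum hv hv8]
  apply Finset.single_le_sum (f := fun i => lam v (i+1))
    (fun i _ => lam_nonneg hv hv8 _)
  rw [Finset.mem_Ico]
  exact ⟨le_rfl, lt_of_lt_of_le (Nat.lt_succ_self k) (Mg_ge k)⟩

lemma gap_ge_one {k : ℕ} (hk2 : 2 ≤ k) (hkK : Kc v ≤ k + 1) :
    1 ≤ Ss v (Mg k) - Ss v k := by
  rw [gap_eq_sum hv hv8]
  have hall : ∀ i ∈ Finset.Ico k (Mg k), lam v (i+1) = Ll v := by
    intro i hi
    rw [Finset.mem_Ico] at hi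
    exact lam_eq_cap hv hv8 (by omega)
  rw [Finset.sum_congr rfl hall, Finset.sum_const, Nat.card_Ico]
  have hM : Mg k = 2*k-1 := Mg_eq hk2
  have hcard : Mg k - k = k - 1 := by omega
  rw [hcard, nsmul_eq_mul]
  have h1 : ((Kc v : ℝ) - 2) * Ll v ≤ ((k:ℝ) - 1) * Ll v := by
    have : (Kc v : ℝ) ≤ (k:ℝ) + 1 := by exact_mod_cast hkK
    have := Ll_pos hv hv8
    nlinarith
  have h2 : (1:ℝ) ≤ ((Kc v : ℝ) - 2) * Ll v := by
    have hceil : (8:ℝ)/v ≤ (⌈(8:ℝ)/v⌉₊ : ℝ) := Nat.le_ceil _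
    have hKcast : ((Kc v : ℕ) : ℝ) = (⌈(8:ℝ)/v⌉₊ : ℝ) + 2 := by
      rw [Kc]; push_cast; ring
    rw [hKcast, Ll]
    have h8 : (8:ℝ)/v * (v/8) = 1 := by field_simp
    nlinarith
  have h3 : ((k - 1 : ℕ) : ℝ) = (k:ℝ) - 1 := by
    rw [Nat.cast_sub (by omega)]; norm_num
  rw [h3]
  calc (1:ℝ) ≤ ((Kc v : ℝ) - 2) * Ll v := h2
    _ ≤ ((k:ℝ) - 1) * Ll v := h1

lemma rr_lt_one : rr v < 1 := by
  have := lam_two_pos hv hv8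
  rw [rr]; nlinarith

lemma rr_pos : 0 < rr v := by
  have h1 := lam_two_pos hv hv8
  have h2 := lam_two_le_one hv hv8
  rw [rr]; nlinarith

set_option maxHeartbeats 1000000 in
lemma Dcore (k : ℕ) (hk : 1 ≤ k) :
    (1-v) * aa v (k-1) + v * aa v (Mg k) ≤ rr v * aa v k := by
  obtain ⟨k', rfl⟩ : ∃ k', k = k'+1 := ⟨k-1, by omega⟩
  have hpred : k'+1-1 = k' := by omega
  rw [hpred]
  have hA : (1-v)*aa v k' + v*aa v (Mg (k'+1))
      = ((1-v)*Real.exp (lam v (k'+1))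
        + v * Real.exp (-(Ss v (Mg (k'+1)) - Ss v (k'+1)))) * aa v (k'+1) := by
    rw [aa_pred hv hv8 k', aa_Mg hv hv8 (k'+1)]; ring
  rw [hA]
  apply mul_le_mul_of_nonneg_right _ (aa_pos hv hv8 _).le
  set L := lam v (k'+1) with hLdef
  set J := Ss v (Mg (k'+1)) - Ss v (k'+1) with hJdef
  have hL0 : 0 ≤ L := lam_nonneg hv hv8 _
  have hLl : L ≤ Ll v := lam_le_Ll hv hv8 _
  have hLl64 : Ll v ≤ 1/64 := Ll_le hv hv8
  have hJ0 : 0 ≤ J := gap_nonneg hv hv8 _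
  have hl2pos := lam_two_pos hv hv8
  have hl2le1 := lam_two_le_one hv hv8
  have hJlam : lam v (k'+2) ≤ J := by
    have := gap_ge_lam_succ hv hv8 (k'+1)
    simpa [hJdef] using this
  rcases Nat.eq_zero_or_pos k' with rfl | hk'pos
  · -- k = 1
    have hL_eq : L = 0 := by rw [hLdef, lam, if_pos (by norm_num)]
    have hJl2 : lam v 2 ≤ J := hJlam
    have hexpJ : Real.exp (-J) ≤ 1/(1 + lam v 2) := by
      calc Real.exp (-J) ≤ Real.exp (-(lam v 2)) :=
            Real.exp_le_exp.2 (neg_le_neg hJl2)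
        _ ≤ 1/(1 + lam v 2) := exp_neg_le_inv hl2pos.le
    rw [hL_eq, Real.exp_zero, rr]
    have hpos : (0:ℝ) < 1 + lam v 2 := by linarith
    have key : 1/(1 + lam v 2) ≤ 1 - lam v 2/2 := by
      rw [div_le_iff₀ hpos]; nlinarith
    nlinarith
  · -- 2 ≤ k
    have hk2 : 2 ≤ k'+1 := by omega
    rcases le_or_gt (k'+1+2) (Kc v) with hP | hC
    · -- pure growth case
      have hls : lam v (k'+2) = cc v * L := by
        have := lam_succ_eq hv hv8 (i := k'+1) hk2 (by omega)
        simpa [hLdef] using this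
      set u := lam v (k'+2) with hudef
      have hu0 : 0 ≤ u := lam_nonneg hv hv8 _
      have hu1 : u ≤ 1 := lam_le_one hv hv8 _
      have hvu : v * u = 4*(1-v)*L := by
        rw [hls, cc]; field_simp
      have hexpL : Real.exp L ≤ 1 + L + L^2 :=
        exp_le_quad hL0 (by linarith)
      have hexpJ : Real.exp (-J) ≤ 1/(1+u) := by
        calc Real.exp (-J) ≤ Real.exp (-u) := Real.exp_le_exp.2 (neg_le_neg hJlam)
          _ ≤ 1/(1+u) := exp_neg_le_inv hu0
      have hupos : (0:ℝ) < 1 + u := by linarith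
      have h1 : v/(1+u) ≤ v - 2*(1-v)*L := by
        rw [div_le_iff₀ hupos]
        nlinarith [hvu, mul_nonneg (mul_nonneg (by linarith : (0:ℝ) ≤ 1-v) hL0)
          (by linarith : (0:ℝ) ≤ 1 - u)]
      have hL2 : lam v 2 ≤ L := by
        rw [hLdef]; exact lam_mono hv hv8 (by omega)
      have hLhalf : L ≤ 1/2 := by linarith
      rw [rr]
      have hv1 : v ≤ 1 - v := by linarith
      calc (1-v)*Real.exp L + v * Real.exp (-J)
          ≤ (1-v)*(1 + L + L^2) + v * (1/(1+u)) := by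
            apply add_le_add
            · apply mul_le_mul_of_nonneg_left hexpL (by linarith)
            · apply mul_le_mul_of_nonneg_left hexpJ hv.le
        _ ≤ (1-v)*(1 + L + L^2) + (v - 2*(1-v)*L) := by
            have : v * (1/(1+u)) = v/(1+u) := by ring
            rw [this]; linarith
        _ = 1 - (1-v)*L*(1-L) := by ring
        _ ≤ 1 - (1-v)*L/2 := by
            nlinarith [mul_nonneg (mul_nonneg (by linarith : (0:ℝ) ≤ 1-v) hL0)
              (by linarith : (0:ℝ) ≤ 1/2 - L)]
        _ ≤ 1 - v * lam v 2 / 2 := by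
            nlinarith [mul_le_mul hv1 hL2 hl2pos.le (by linarith : (0:ℝ) ≤ 1-v)]
    · -- capped case
      have hJ1 : 1 ≤ J := gap_ge_one hv hv8 hk2 (by omega)
      have hexpL : Real.exp L ≤ 1 + L + L^2 :=
        exp_le_quad hL0 (by linarith)
      have hexpJ : Real.exp (-J) ≤ 1/2 := by
        calc Real.exp (-J) ≤ Real.exp (-1) := Real.exp_le_exp.2 (neg_le_neg hJ1)
          _ ≤ 1/(1+1) := exp_neg_le_inv (by norm_num)
          _ = 1/2 := by norm_num
      have hLlv : Ll v = v/8 := rfl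
      have hl2Ll : lam v 2 ≤ Ll v := lam_le_Ll hv hv8 2
      have hL8 : L ≤ v/8 := by rw [hLlv] at hLl; exact hLl
      have hl28 : lam v 2 ≤ v/8 := by rw [hLlv] at hl2Ll; exact hl2Ll
      rw [rr]
      calc (1-v)*Real.exp L + v * Real.exp (-J)
          ≤ (1-v)*(1 + L + L^2) + v * (1/2) := by
            apply add_le_add
            · apply mul_le_mul_of_nonneg_left hexpL (by linarith)
            · apply mul_le_mul_of_nonneg_left hexpJ hv.le
        _ ≤ 1 - v * lam v 2 / 2 := by
            nlinarith [mul_le_mul hL8 hL8 hL0 (by linarith : (0:ℝ) ≤ v/8),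
              mul_le_mul_of_nonneg_left hl28 hv.le,
              mul_nonneg hv.le hL0, mul_nonneg hv.le (mul_nonneg hL0 hL0)]

end

/-- the per-coordinate Lyapunov function -/
def psi (v : ℝ) (t : ℝ) : ℝ := if t ≤ 0 then 0 else aa v ⌈Real.logb 2 t⁻¹⌉₊

section
include hv hv8

lemma psi_nonneg (t : ℝ) : 0 ≤ psi v t := by
  rw [psi]; split
  · exact le_rfl
  · exact (aa_pos hv hv8 _).le

lemma psi_le_one (t : ℝ) : psi v t ≤ 1 := by
  rw [psi]; split
  · norm_num
  · exact aa_le_one hv hv8 _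

lemma psi_pos {t : ℝ} (ht : 0 < t) : 0 < psi v t := by
  rw [psi, if_neg (by linarith)]
  exact aa_pos hv hv8 _

lemma psi_mono : Monotone (psi v) := by
  intro t s hts
  rcases le_or_gt t 0 with ht | ht
  · rw [psi, if_pos ht]
    exact psi_nonneg hv hv8 s
  · have hs : 0 < s := lt_of_lt_of_le ht hts
    rw [psi, if_neg (by linarith), psi, if_neg (by linarith)]
    apply aa_antitone hv hv8
    apply Nat.ceil_le_ceil
    apply Real.logb_le_logb_of_le (by norm_num) (by positivity)
    exact inv_anti₀ ht hts

lemma psi_eq {t : ℝ} (ht : 0 < t) : psi v t = aa v ⌈Real.logb 2 t⁻¹⌉₊ := by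
  rw [psi, if_neg (by linarith)]

lemma psi_step {t : ℝ} (h0 : 0 ≤ t) (h2 : t ≤ 1/2) :
    (1-v) * psi v (2*t) + v * psi v (t^2) ≤ rr v * psi v t := by
  rcases h0.eq_or_lt with rfl | ht
  · simp [psi]
  · set L := Real.logb 2 t⁻¹ with hLdef
    have h2t : (2:ℝ) ≤ t⁻¹ := by
      rw [show (2:ℝ) = (1/2)⁻¹ by norm_num]
      exact inv_anti₀ ht h2
    have hL1 : 1 ≤ L := by
      rw [hLdef, show (1:ℝ) = Real.logb 2 2 from (Real.logb_self_eq_one (by norm_num)).symm]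
      exact Real.logb_le_logb_of_le (by norm_num) (by norm_num) h2t
    set k := ⌈L⌉₊ with hkdef
    have hk1 : 1 ≤ k := Nat.one_le_ceil_iff.2 (by linarith)
    have hkL : (k:ℝ) < L + 1 := Nat.ceil_lt_add_one (by linarith)
    have hLk : L ≤ (k:ℝ) := Nat.le_ceil L
    -- psi t
    have hpt : psi v t = aa v k := psi_eq hv hv8 ht
    -- psi (2t)
    have h2tpos : 0 < 2*t := by linarith
    have hlog2t : Real.logb 2 (2*t)⁻¹ = L - 1 := by
      rw [mul_inv]
      rw [Real.logb_mul (by norm_num) (by positivity)]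
      rw [Real.logb_inv, Real.logb_self_eq_one (by norm_num), hLdef]
      ring
    have hceil2t : ⌈L - 1⌉₊ = k - 1 := by
      have h := Nat.ceil_add_one (R := ℝ) (a := L - 1) (by linarith)
      rw [sub_add_cancel] at h
      omega
    have hp2t : psi v (2*t) = aa v (k-1) := by
      rw [psi_eq hv hv8 h2tpos, hlog2t, hceil2t]
    -- psi (t^2)
    have htsq : 0 < t^2 := by positivity
    have hlogsq : Real.logb 2 (t^2)⁻¹ = 2*L := by
      rw [show (t^2)⁻¹ = t⁻¹ * t⁻¹ by rw [sq]; rw [mul_inv]]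
      rw [Real.logb_mul (by positivity) (by positivity), hLdef]
      ring
    have hk2ge : Mg k ≤ ⌈2*L⌉₊ := by
      have hge1 : 2*k - 1 ≤ ⌈2*L⌉₊ := by
        have : ((2*k - 2 : ℕ) : ℝ) < 2*L := by
          have : ((2*k - 2 : ℕ) : ℝ) = 2*(k:ℝ) - 2 := by
            have : 2 ≤ 2*k := by omega
            push_cast [Nat.cast_sub this]
            ring
          rw [this]; linarith
        have := Nat.lt_ceil.2 this
        omega
      have hge2 : k + 1 ≤ ⌈2*L⌉₊ := by
        have : (k:ℝ) < 2*L := by linarith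
        have := Nat.lt_ceil.2 this
        omega
      rw [Mg]; omega
    have hpsq : psi v (t^2) ≤ aa v (Mg k) := by
      rw [psi_eq hv hv8 htsq, hlogsq]
      exact aa_antitone hv hv8 hk2ge
    rw [hpt, hp2t]
    calc (1-v) * aa v (k-1) + v * psi v (t^2)
        ≤ (1-v) * aa v (k-1) + v * aa v (Mg k) := by
          have := mul_le_mul_of_nonneg_left hpsq hv.le
          linarith
      _ ≤ rr v * aa v k := Dcore hv hv8 k hk1

end

section QSO

variable {m : ℕ} {q : Fin m → Fin m → Fin m → ℝ} {y : Fin m → ℝ}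

lemma q_le_one (hq0 : ∀ i j l, 0 ≤ q i j l) (hq1 : ∀ i j, ∑ l, q i j l = 1)
    (i j l : Fin m) : q i j l ≤ 1 := by
  rw [← hq1 i j]
  exact Finset.single_le_sum (fun l _ => hq0 i j l) (Finset.mem_univ l)

lemma qso_nonneg (hq0 : ∀ i j l, 0 ≤ q i j l) (hy : ∀ i, 0 ≤ y i) (k : Fin m) :
    0 ≤ qsoMap q y k := by
  apply Finset.sum_nonneg
  intro i _
  apply Finset.sum_nonneg
  intro j _
  exact mul_nonneg (mul_nonneg (hq0 i j k) (hy i)) (hy j)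

lemma qso_sum (hq1 : ∀ i j, ∑ l, q i j l = 1) (hy : ∑ i, y i = 1) :
    ∑ k, qsoMap q y k = 1 := by
  unfold qsoMap
  rw [Finset.sum_comm]
  have h1 : ∀ i : Fin m, ∑ k, ∑ j, q i j k * y i * y j = y i := by
    intro i
    rw [Finset.sum_comm]
    have h2 : ∀ j : Fin m, ∑ k, q i j k * y i * y j = y i * y j := by
      intro j
      rw [← Finset.sum_mul, ← Finset.sum_mul, hq1 i j, one_mul]
    rw [Finset.sum_congr rfl (fun j _ => h2 j), ← Finset.mul_sum, hy, mul_one]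
  rw [Finset.sum_congr rfl (fun i _ => h1 i), hy]

lemma qso_mem (hq0 : ∀ i j l, 0 ≤ q i j l) (hq1 : ∀ i j, ∑ l, q i j l = 1)
    (hy : y ∈ stdSimplex ℝ (Fin m)) : qsoMap q y ∈ stdSimplex ℝ (Fin m) :=
  ⟨qso_nonneg hq0 hy.1, qso_sum hq1 hy.2⟩

lemma qso_le_two (hq0 : ∀ i j l, 0 ≤ q i j l) (hq1 : ∀ i j, ∑ l, q i j l = 1)
    (hqv : ∀ i j l, l ≠ i → l ≠ j → q i j l = 0)
    (hy : y ∈ stdSimplex ℝ (Fin m)) (j : Fin m) :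
    qsoMap q y j ≤ 2 * y j := by
  have hy0 := hy.1
  have hy1 := hy.2
  have hyj1 : y j ≤ 1 := by
    rw [← hy1]
    exact Finset.single_le_sum (fun i _ => hy0 i) (Finset.mem_univ j)
  have hstep : ∀ i : Fin m, ∑ l, q i l j * y i * y l
      ≤ y i * y j + (if i = j then y j - y j * y j else 0) := by
    intro i
    rcases eq_or_ne i j with rfl | hij
    · rw [if_pos rfl]
      have : ∀ l : Fin m, q i l i * y i * y l ≤ y i * y l := by
        intro l
        apply mul_le_mul_of_nonneg_right _ (hy0 l)
        nlinarith [q_le_one hq0 hq1 i l i, hq0 i l i, hy0 i]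
      calc ∑ l, q i l i * y i * y l ≤ ∑ l, y i * y l :=
            Finset.sum_le_sum (fun l _ => this l)
        _ = y i * 1 := by rw [← Finset.mul_sum, hy1]
        _ ≤ y i * y i + (y i - y i * y i) := by ring_nf; nlinarith
    · rw [if_neg hij, add_zero]
      have hterm : ∀ l : Fin m, q i l j * y i * y l
          ≤ (if l = j then y i * y j else 0) := by
        intro l
        rcases eq_or_ne l j with rfl | hlj
        · rw [if_pos rfl]
          apply mul_le_mul_of_nonneg_right _ (hy0 l)
          nlinarith [q_le_one hq0 hq1 i l l, hq0 i l l, hy0 i]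
        · rw [if_neg hlj, hqv i l j (Ne.symm hij) (Ne.symm hlj)]
          ring_nf
          exact le_rfl
      calc ∑ l, q i l j * y i * y l ≤ ∑ l, (if l = j then y i * y j else 0) :=
            Finset.sum_le_sum (fun l _ => hterm l)
        _ = y i * y j := by rw [Finset.sum_ite_eq' Finset.univ j (fun _ => y i * y j)]
                            simp
  calc qsoMap q y j ≤ ∑ i, (y i * y j + (if i = j then y j - y j * y j else 0)) :=
        Finset.sum_le_sum (fun i _ => hstep i)
    _ = (∑ i, y i * y j) + (y j - y j * y j) := by
        rw [Finset.sum_add_distrib, Finset.sum_ite_eq' Finset.univ j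
          (fun _ => y j - y j * y j)]
        simp
    _ = y j + (y j - y j * y j) := by rw [← Finset.sum_mul, hy1, one_mul]
    _ ≤ 2 * y j := by nlinarith [hy0 j]

lemma coord_le_one (hy : y ∈ stdSimplex ℝ (Fin m)) (j : Fin m) : y j ≤ 1 := by
  rw [← hy.2]
  exact Finset.single_le_sum (fun i _ => hy.1 i) (Finset.mem_univ j)

lemma coord_le_half (hy : y ∈ stdSimplex ℝ (Fin m)) {i0 j : Fin m}
    (hmax : ∀ l, y l ≤ y i0) (hj : j ≠ i0) : y j ≤ 1/2 := by
  have h1 : y j + y i0 ≤ ∑ l, y l := by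
    have := Finset.add_sum_erase Finset.univ y (Finset.mem_univ i0)
    have h2 : y j ≤ ∑ l ∈ Finset.univ.erase i0, y l :=
      Finset.single_le_sum (fun l _ => hy.1 l)
        (Finset.mem_erase.2 ⟨hj, Finset.mem_univ j⟩)
    linarith [this]
  rw [hy.2] at h1
  linarith [hmax j]

end QSO

end

section ZF

variable {v : ℝ} (hv : 0 < v) (hv8 : v ≤ 1/8)
variable {m : ℕ} [NeZero m]

/-- total Lyapunov function: sum minus max -/
noncomputable def Zf (v : ℝ) (m : ℕ) [NeZero m] (y : Fin m → ℝ) : ℝ :=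
  (∑ j, psi v (y j)) - Finset.univ.sup' Finset.univ_nonempty (fun j => psi v (y j))

include hv hv8

lemma Zf_le_sum_erase (y : Fin m → ℝ) (i : Fin m) :
    Zf v m y ≤ ∑ j ∈ Finset.univ.erase i, psi v (y j) := by
  rw [Zf]
  have h1 : psi v (y i) ≤ Finset.univ.sup' Finset.univ_nonempty (fun j => psi v (y j)) :=
    Finset.le_sup' (fun j => psi v (y j)) (Finset.mem_univ i)
  have h2 : ∑ j ∈ Finset.univ.erase i, psi v (y j) + psi v (y i) = ∑ j, psi v (y j) :=
    Finset.sum_erase_add Finset.univ _ (Finset.mem_univ i)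
  linarith

lemma Zf_nonneg (y : Fin m → ℝ) : 0 ≤ Zf v m y := by
  obtain ⟨i0, -, hmax⟩ := Finset.exists_max_image (Finset.univ : Finset (Fin m))
    (fun j => psi v (y j)) Finset.univ_nonempty
  rw [Zf, sub_nonneg]
  apply Finset.sup'_le
  intro j _
  exact Finset.single_le_sum (fun l _ => psi_nonneg hv hv8 _) (Finset.mem_univ j)

lemma Zf_le (y : Fin m → ℝ) : Zf v m y ≤ m := by
  rw [Zf]
  have h1 : ∑ j, psi v (y j) ≤ ∑ _j : Fin m, (1:ℝ) :=
    Finset.sum_le_sum (fun j _ => psi_le_one hv hv8 _)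
  have h2 : (0:ℝ) ≤ Finset.univ.sup' Finset.univ_nonempty (fun j => psi v (y j)) := by
    obtain ⟨i0⟩ : Nonempty (Fin m) := inferInstance
    exact le_trans (psi_nonneg hv hv8 (y i0))
      (Finset.le_sup' (fun j => psi v (y j)) (Finset.mem_univ i0))
  have h3 : ∑ _j : Fin m, (1:ℝ) = m := by simp
  linarith

lemma Zf_eq_erase_max {y : Fin m → ℝ} {i0 : Fin m} (hmax : ∀ l, y l ≤ y i0) :
    Zf v m y = ∑ j ∈ Finset.univ.erase i0, psi v (y j) := by
  rw [Zf]
  have hsup : Finset.univ.sup' Finset.univ_nonempty (fun j => psi v (y j))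
      = psi v (y i0) := by
    apply le_antisymm
    · exact Finset.sup'_le _ _ (fun j _ => psi_mono hv hv8 (hmax j))
    · exact Finset.le_sup' (fun j => psi v (y j)) (Finset.mem_univ i0)
  rw [hsup]
  have h2 : ∑ j ∈ Finset.univ.erase i0, psi v (y j) + psi v (y i0) = ∑ j, psi v (y j) :=
    Finset.sum_erase_add Finset.univ _ (Finset.mem_univ i0)
  linarith

lemma Zf_ge_bad {y : Fin m → ℝ} {i0 j : Fin m} (hmax : ∀ l, y l ≤ y i0)
    (hj : j ≠ i0) : psi v (y j) ≤ Zf v m y := by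
  rw [Zf_eq_erase_max hv hv8 hmax]
  exact Finset.single_le_sum (fun l _ => psi_nonneg hv hv8 _)
    (Finset.mem_erase.2 ⟨hj, Finset.mem_univ j⟩)

end ZF

section STEP

variable {m : ℕ} [NeZero m]

lemma step_real
    (p : ℕ → Fin m → Fin m → Fin m → ℝ)
    (hnonneg : ∀ n i j l, 0 ≤ p n i j l)
    (hsum : ∀ n i j, ∑ l, p n i j l = 1)
    (hvol : ∀ n i j l, l ≠ i → l ≠ j → p n i j l = 0)
    (hsq : ∀ k : Fin m, ∀ x ∈ stdSimplex ℝ (Fin m), qsoMap (p (k : ℕ)) x k = x k ^ 2)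
    (ν : ℕ → ℝ) (hν0 : ∀ j, 0 ≤ ν j) (hν1 : ∑' j, ν j = 1)
    {v : ℝ} (hv : 0 < v) (hv8 : v ≤ 1/8) (hvle : ∀ k : Fin m, v ≤ ν (k : ℕ))
    {y : Fin m → ℝ} (hy : y ∈ stdSimplex ℝ (Fin m)) :
    ∑' r : ℕ, ν r * Zf v m (qsoMap (p r) y) ≤ rr v * Zf v m y := by
  classical
  obtain ⟨i0, -, hmax'⟩ := Finset.exists_max_image (Finset.univ : Finset (Fin m)) y
    Finset.univ_nonempty
  have hmax : ∀ l, y l ≤ y i0 := fun l => hmax' l (Finset.mem_univ l)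
  have hνsum : Summable ν := by
    by_contra h
    rw [tsum_eq_zero_of_not_summable h] at hν1
    norm_num at hν1
  -- summability helpers
  have hZb : ∀ r : ℕ, Zf v m (qsoMap (p r) y) ≤ m := fun r => Zf_le hv hv8 _
  have hZ0 : ∀ r : ℕ, 0 ≤ Zf v m (qsoMap (p r) y) := fun r => Zf_nonneg hv hv8 _
  have hsumm1 : Summable (fun r => ν r * Zf v m (qsoMap (p r) y)) := by
    apply Summable.of_nonneg_of_le (fun r => mul_nonneg (hν0 r) (hZ0 r))
      (fun r => mul_le_mul_of_nonneg_left (hZb r) (hν0 r))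
    exact hνsum.mul_right _
  have hpsib : ∀ (r : ℕ) (j : Fin m), psi v (qsoMap (p r) y j) ≤ 1 :=
    fun r j => psi_le_one hv hv8 _
  have hpsi0 : ∀ (r : ℕ) (j : Fin m), 0 ≤ psi v (qsoMap (p r) y j) :=
    fun r j => psi_nonneg hv hv8 _
  have hsummj : ∀ j : Fin m, Summable (fun r => ν r * psi v (qsoMap (p r) y j)) := by
    intro j
    apply Summable.of_nonneg_of_le (fun r => mul_nonneg (hν0 r) (hpsi0 r j))
      (fun r => mul_le_mul_of_nonneg_left (hpsib r j) (hν0 r))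
    simpa using hνsum
  have hsumm2 : Summable
      (fun r => ∑ j ∈ Finset.univ.erase i0, ν r * psi v (qsoMap (p r) y j)) := by
    exact summable_sum (fun j _ => hsummj j)
  -- step 1: bound by erase sums
  have h1 : ∑' r : ℕ, ν r * Zf v m (qsoMap (p r) y)
      ≤ ∑' r : ℕ, ∑ j ∈ Finset.univ.erase i0, ν r * psi v (qsoMap (p r) y j) := by
    apply Summable.tsum_le_tsum _ hsumm1 hsumm2
    intro r
    rw [← Finset.mul_sum]
    exact mul_le_mul_of_nonneg_left (Zf_le_sum_erase hv hv8 _ i0) (hν0 r)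
  -- step 2: swap sums
  have h2 : ∑' r : ℕ, ∑ j ∈ Finset.univ.erase i0, ν r * psi v (qsoMap (p r) y j)
      = ∑ j ∈ Finset.univ.erase i0, ∑' r : ℕ, ν r * psi v (qsoMap (p r) y j) :=
    Summable.tsum_finsetSum (fun j _ => hsummj j)
  -- step 3: per coordinate bound
  have h3 : ∀ j ∈ Finset.univ.erase i0,
      ∑' r : ℕ, ν r * psi v (qsoMap (p r) y j) ≤ rr v * psi v (y j) := by
    intro j hjmem
    have hj : j ≠ i0 := (Finset.mem_erase.1 hjmem).1
    have hyj0 : 0 ≤ y j := hy.1 j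
    have hyj1 : y j ≤ 1 := coord_le_one hy j
    have hyjh : y j ≤ 1/2 := coord_le_half hy hmax hj
    have hsplit := Summable.tsum_eq_add_tsum_ite (hsummj j) (j : ℕ)
    have hsq' : qsoMap (p (j:ℕ)) y j = y j ^ 2 := hsq j y hy
    have hite : ∑' r : ℕ, (if r = (j:ℕ) then 0 else ν r * psi v (qsoMap (p r) y j))
        ≤ (1 - ν (j:ℕ)) * psi v (2 * y j) := by
      have hb : ∀ r : ℕ, (if r = (j:ℕ) then 0 else ν r * psi v (qsoMap (p r) y j))
          ≤ (if r = (j:ℕ) then 0 else ν r) * psi v (2 * y j) := by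
        intro r
        rcases eq_or_ne r (j:ℕ) with rfl | hr
        · simp
        · rw [if_neg hr, if_neg hr]
          apply mul_le_mul_of_nonneg_left _ (hν0 r)
          apply psi_mono hv hv8
          exact qso_le_two (hnonneg r) (hsum r) (hvol r) hy j
      have hs1 : Summable (fun r : ℕ =>
          if r = (j:ℕ) then 0 else ν r * psi v (qsoMap (p r) y j)) := by
        apply Summable.of_nonneg_of_le _ _ (hsummj j)
        · intro r; split
          · exact le_rfl
          · exact mul_nonneg (hν0 r) (hpsi0 r j)
        · intro r; split
          · exact mul_nonneg (hν0 r) (hpsi0 r j)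
          · exact le_rfl
      have hs2 : Summable (fun r : ℕ => (if r = (j:ℕ) then 0 else ν r)) := by
        apply Summable.of_nonneg_of_le _ _ hνsum
        · intro r; split
          · exact le_rfl
          · exact hν0 r
        · intro r; split
          · exact hν0 r
          · exact le_rfl
      calc ∑' r : ℕ, (if r = (j:ℕ) then 0 else ν r * psi v (qsoMap (p r) y j))
          ≤ ∑' r : ℕ, (if r = (j:ℕ) then 0 else ν r) * psi v (2 * y j) :=
            Summable.tsum_le_tsum hb hs1 (hs2.mul_right _)
        _ = (∑' r : ℕ, (if r = (j:ℕ) then 0 else ν r)) * psi v (2 * y j) :=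
            tsum_mul_right
        _ = (1 - ν (j:ℕ)) * psi v (2 * y j) := by
            have := Summable.tsum_eq_add_tsum_ite hνsum (j : ℕ)
            rw [hν1] at this
            have heq : ∑' r : ℕ, (if r = (j:ℕ) then 0 else ν r) = 1 - ν (j:ℕ) := by
              linarith
            rw [heq]
    have hνj1 : ν (j:ℕ) ≤ 1 := by
      rw [← hν1]
      exact Summable.le_tsum hνsum (j:ℕ) (fun r _ => hν0 r)
    have hAB : psi v (y j ^ 2) ≤ psi v (2 * y j) := by
      apply psi_mono hv hv8
      nlinarith
    have hνv := hvle j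
    calc ∑' r : ℕ, ν r * psi v (qsoMap (p r) y j)
        = ν (j:ℕ) * psi v (qsoMap (p (j:ℕ)) y j)
          + ∑' r : ℕ, (if r = (j:ℕ) then 0 else ν r * psi v (qsoMap (p r) y j)) :=
          hsplit
      _ ≤ ν (j:ℕ) * psi v (y j ^ 2) + (1 - ν (j:ℕ)) * psi v (2 * y j) := by
          rw [hsq']
          linarith [hite]
      _ ≤ v * psi v (y j ^ 2) + (1 - v) * psi v (2 * y j) := by nlinarith
      _ ≤ rr v * psi v (y j) := by
          have := psi_step hv hv8 hyj0 hyjh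
          linarith
  calc ∑' r : ℕ, ν r * Zf v m (qsoMap (p r) y)
      ≤ ∑ j ∈ Finset.univ.erase i0, ∑' r : ℕ, ν r * psi v (qsoMap (p r) y j) := by
        rw [← h2]; exact h1
    _ ≤ ∑ j ∈ Finset.univ.erase i0, rr v * psi v (y j) := Finset.sum_le_sum h3
    _ = rr v * Zf v m y := by
        rw [Zf_eq_erase_max hv hv8 hmax, Finset.mul_sum]

end STEP

end RVQSO


open scoped ENNReal

/-- In the setting of the main theorem, for every `ε > 0` and every
`x ∈ S^{m-1}` the probabilities `ℙ(T_n ∘ ⋯ ∘ T_1 (x) ∈ S^{m-1} \ U_ε)` are summable. -/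
theorem random_volterra_exit_prob_summable
    {Ω : Type*} {mΩ : MeasurableSpace Ω} (μ : Measure Ω) [IsProbabilityMeasure μ]
    (m : ℕ) (hm : 2 ≤ m)
    (p : ℕ → Fin m → Fin m → Fin m → ℝ)
    (hsymm : ∀ n i j l, p n i j l = p n j i l)
    (hnonneg : ∀ n i j l, 0 ≤ p n i j l)
    (hsum : ∀ n i j, ∑ l, p n i j l = 1)
    (hvol : ∀ n i j l, l ≠ i → l ≠ j → p n i j l = 0)
    (hsq : ∀ k : Fin m, ∀ x ∈ stdSimplex ℝ (Fin m), qsoMap (p (k : ℕ)) x k = x k ^ 2)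
    (ν : ℕ → ℝ) (hν0 : ∀ j, 0 ≤ ν j) (hν1 : ∑' j, ν j = 1)
    (hνpos : ∀ k : Fin m, 0 < ν (k : ℕ))
    (ξ : ℕ → Ω → ℕ) (hξmeas : ∀ n, Measurable (ξ n))
    (hindep : iIndepFun ξ μ)
    (hlaw : ∀ n j, μ {ω | ξ n ω = j} = ENNReal.ofReal (ν j))
    (ε : ℝ) (hε : 0 < ε) :
    ∀ x ∈ stdSimplex ℝ (Fin m),
      (∑' n : ℕ, μ {ω |
          ((List.range (n + 1)).foldl (fun y l => qsoMap (p (ξ l ω)) y) x)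
              ∈ stdSimplex ℝ (Fin m) ∧
          ¬ ∃ i : Fin m, ∀ j : Fin m, j ≠ i →
            ((List.range (n + 1)).foldl (fun y l => qsoMap (p (ξ l ω)) y) x) j < ε})
        < ⊤ := by
  classical
  intro x hx
  haveI : NeZero m := ⟨by omega⟩
  -- the contraction parameter
  set νm : ℝ := Finset.univ.inf' Finset.univ_nonempty (fun k : Fin m => ν (k : ℕ)) with hνm
  have hνmpos : 0 < νm := by
    rw [hνm, Finset.lt_inf'_iff]
    exact fun k _ => hνpos k
  set v : ℝ := min (1/8 : ℝ) νm with hvdef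
  have hv : 0 < v := lt_min (by norm_num) hνmpos
  have hv8 : v ≤ 1/8 := min_le_left _ _
  have hvle : ∀ k : Fin m, v ≤ ν (k : ℕ) := fun k =>
    (min_le_right _ _).trans (Finset.inf'_le _ (Finset.mem_univ k))
  have hrr0 : 0 ≤ RVQSO.rr v := (RVQSO.rr_pos hv hv8).le
  have hrr1 : RVQSO.rr v < 1 := RVQSO.rr_lt_one hv hv8
  -- the iteration
  set X : ℕ → Ω → Fin m → ℝ :=
    fun N ω => (List.range N).foldl (fun y l => qsoMap (p (ξ l ω)) y) x with hX
  have hXsucc : ∀ N ω, X (N+1) ω = qsoMap (p (ξ N ω)) (X N ω) := by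
    intro N ω
    simp only [hX, List.range_succ, List.foldl_append, List.foldl_cons, List.foldl_nil]
  have hXmem : ∀ N ω, X N ω ∈ stdSimplex ℝ (Fin m) := by
    intro N
    induction N with
    | zero => intro ω; simpa [hX] using hx
    | succ N ih =>
        intro ω
        rw [hXsucc]
        exact RVQSO.qso_mem (hnonneg _) (hsum _) (ih ω)
  -- measurability
  have hqsoMeas : ∀ r : ℕ, Measurable (fun y : Fin m → ℝ => qsoMap (p r) y) := by
    intro r
    apply measurable_pi_lambda
    intro k
    apply Finset.measurable_sum
    intro i _
    apply Finset.measurable_sum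
    intro j _
    exact (measurable_const.mul (measurable_pi_apply i)).mul (measurable_pi_apply j)
  have hFmeas : Measurable (fun q : (Fin m → ℝ) × ℕ => qsoMap (p q.2) q.1) :=
    measurable_from_prod_countable_left (fun r => hqsoMeas r)
  have hXmeas : ∀ N, Measurable (X N) := by
    intro N
    induction N with
    | zero =>
        have : X 0 = fun _ => x := by
          funext ω; simp [hX]
        rw [this]; exact measurable_const
    | succ N ih =>
        have : X (N+1) = (fun q : (Fin m → ℝ) × ℕ => qsoMap (p q.2) q.1)
            ∘ (fun ω => (X N ω, ξ N ω)) := by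
          funext ω
          exact hXsucc N ω
        rw [this]
        exact hFmeas.comp (ih.prodMk (hξmeas N))
  have hpsiMeas : Measurable (RVQSO.psi v) := (RVQSO.psi_mono hv hv8).measurable
  have hZfMeas : Measurable (fun y : Fin m → ℝ => RVQSO.Zf v m y) := by
    apply Measurable.sub
    · apply Finset.measurable_sum
      intro j _
      exact hpsiMeas.comp (measurable_pi_apply j)
    · have heq : (fun a : Fin m → ℝ =>
          Finset.univ.sup' Finset.univ_nonempty fun j => RVQSO.psi v (a j))
          = Finset.univ.sup' Finset.univ_nonempty
            (fun (j : Fin m) (y : Fin m → ℝ) => RVQSO.psi v (y j)) := by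
        funext a
        rw [Finset.sup'_apply]
      rw [heq]
      exact Finset.measurable_sup' Finset.univ_nonempty
        (fun j _ => hpsiMeas.comp (measurable_pi_apply j))
  -- independence of X N and ξ N
  have hIndep : ∀ N, IndepFun (X N) (ξ N) μ := by
    intro N
    have hdisj : Disjoint (Finset.range N) ({N} : Finset ℕ) := by
      simp only [Finset.disjoint_left, Finset.mem_range, Finset.mem_singleton]
      omega
    have h1 := hindep.indepFun_finset (Finset.range N) ({N} : Finset ℕ) hdisj hξmeas
    set Φ : ((i : (Finset.range N : Finset ℕ)) → ℕ) → (Fin m → ℝ) := fun w =>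
      (List.range N).foldl
        (fun y l => qsoMap (p (if h : l ∈ Finset.range N then w ⟨l, h⟩ else 0)) y) x with hΦ
    have hΦmeas : Measurable Φ := measurable_of_countable _
    have hπmeas : Measurable (fun w : ((i : ({N} : Finset ℕ)) → ℕ) =>
        w ⟨N, Finset.mem_singleton_self N⟩) := measurable_of_countable _
    have h2 := h1.comp hΦmeas hπmeas
    have hfold : ∀ (L : List ℕ) (y0 : Fin m → ℝ) (f1 f2 : ℕ → ℕ),
        (∀ l ∈ L, f1 l = f2 l) →
        L.foldl (fun y l => qsoMap (p (f1 l)) y) y0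
          = L.foldl (fun y l => qsoMap (p (f2 l)) y) y0 := by
      intro L
      induction L with
      | nil => intro y0 f1 f2 _; rfl
      | cons a L ih =>
          intro y0 f1 f2 hagree
          simp only [List.foldl_cons]
          rw [hagree a (by simp)]
          exact ih _ f1 f2 (fun l hl => hagree l (by simp [hl]))
    have hXeq : X N = Φ ∘ (fun ω (i : (Finset.range N : Finset ℕ)) => ξ i ω) := by
      funext ω
      simp only [hX, hΦ, Function.comp_apply]
      apply hfold
      intro l hl
      have hlN : l ∈ Finset.range N := by
        rw [Finset.mem_range]
        exact List.mem_range.1 hl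
      rw [dif_pos hlN]
    have hξeq : ξ N = (fun w : ((i : ({N} : Finset ℕ)) → ℕ) =>
        w ⟨N, Finset.mem_singleton_self N⟩) ∘ (fun ω (i : ({N} : Finset ℕ)) => ξ i ω) := by
      funext ω; rfl
    rw [hXeq, hξeq]
    exact h2
  -- the factorization identity
  have hfact : ∀ (N : ℕ) (r : ℕ) (g : (Fin m → ℝ) → ℝ≥0∞), Measurable g →
      (∫⁻ ω, ({ω' | ξ N ω' = r}.indicator (fun ω' => g (X N ω')) ω) ∂μ)
        = μ {ω' | ξ N ω' = r} * ∫⁻ ω, g (X N ω) ∂μ := by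
    intro N r g hg
    have hAeq : {ω' | ξ N ω' = r} = (ξ N) ⁻¹' {r} := by
      ext ω'; simp
    have hA : MeasurableSet {ω' | ξ N ω' = r} := by
      rw [hAeq]; exact hξmeas N (measurableSet_singleton r)
    rw [lintegral_indicator hA]
    have hmapr : Measure.map (X N) (μ.restrict {ω' | ξ N ω' = r})
        = μ {ω' | ξ N ω' = r} • Measure.map (X N) μ := by
      apply Measure.ext
      intro s hs
      rw [Measure.map_apply (hXmeas N) hs, Measure.restrict_apply ((hXmeas N) hs)]
      rw [Measure.smul_apply, Measure.map_apply (hXmeas N) hs, smul_eq_mul]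
      have hind := (ProbabilityTheory.indepFun_iff_measure_inter_preimage_eq_mul.1
        (hIndep N)) s {r} hs (measurableSet_singleton r)
      rw [hAeq]
      rw [hind]
      ring
    calc ∫⁻ ω in {ω' | ξ N ω' = r}, g (X N ω) ∂μ
        = ∫⁻ z, g z ∂(Measure.map (X N) (μ.restrict {ω' | ξ N ω' = r})) :=
          (lintegral_map hg (hXmeas N)).symm
      _ = μ {ω' | ξ N ω' = r} * ∫⁻ z, g z ∂(Measure.map (X N) μ) := by
          rw [hmapr, lintegral_smul_measure, smul_eq_mul]
      _ = μ {ω' | ξ N ω' = r} * ∫⁻ ω, g (X N ω) ∂μ := by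
          rw [lintegral_map hg (hXmeas N)]
  -- summability of the step series
  have hνsum : Summable ν := by
    by_contra h
    rw [tsum_eq_zero_of_not_summable h] at hν1
    norm_num at hν1
  -- per-r integrand measurability
  have hgmeas : ∀ r : ℕ, Measurable
      (fun z : Fin m → ℝ => ENNReal.ofReal (RVQSO.Zf v m (qsoMap (p r) z))) := by
    intro r
    exact ENNReal.measurable_ofReal.comp (hZfMeas.comp (hqsoMeas r))
  -- one-step contraction in expectation
  set Zn : ℕ → ℝ≥0∞ :=
    fun N => ∫⁻ ω, ENNReal.ofReal (RVQSO.Zf v m (X N ω)) ∂μ with hZn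
  have hrec : ∀ N, Zn (N+1) ≤ ENNReal.ofReal (RVQSO.rr v) * Zn N := by
    intro N
    have hdecomp : ∀ ω, ENNReal.ofReal (RVQSO.Zf v m (X (N+1) ω))
        = ∑' r : ℕ, ({ω' | ξ N ω' = r}.indicator
            (fun ω' => ENNReal.ofReal (RVQSO.Zf v m (qsoMap (p r) (X N ω')))) ω) := by
      intro ω
      rw [tsum_eq_single (ξ N ω) ?_]
      · rw [Set.indicator_of_mem (show ω ∈ {ω' | ξ N ω' = ξ N ω} from rfl)]
        rw [hXsucc]
      · intro r hr
        apply Set.indicator_of_notMem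
        intro hmem
        exact hr hmem.symm
    have hindmeas : ∀ r : ℕ, Measurable
        (fun ω => ({ω' | ξ N ω' = r}.indicator
          (fun ω' => ENNReal.ofReal (RVQSO.Zf v m (qsoMap (p r) (X N ω')))) ω)) := by
      intro r
      have hAeq : {ω' | ξ N ω' = r} = (ξ N) ⁻¹' {r} := by ext ω'; simp
      have hA : MeasurableSet {ω' | ξ N ω' = r} := by
        rw [hAeq]; exact hξmeas N (measurableSet_singleton r)
      exact ((hgmeas r).comp (hXmeas N)).indicator hA
    calc Zn (N+1)
        = ∫⁻ ω, ∑' r : ℕ, ({ω' | ξ N ω' = r}.indicator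
            (fun ω' => ENNReal.ofReal (RVQSO.Zf v m (qsoMap (p r) (X N ω')))) ω) ∂μ := by
          rw [hZn]
          exact lintegral_congr hdecomp
      _ = ∑' r : ℕ, ∫⁻ ω, ({ω' | ξ N ω' = r}.indicator
            (fun ω' => ENNReal.ofReal (RVQSO.Zf v m (qsoMap (p r) (X N ω')))) ω) ∂μ :=
          lintegral_tsum (fun r => (hindmeas r).aemeasurable)
      _ = ∑' r : ℕ, ENNReal.ofReal (ν r)
            * ∫⁻ ω, ENNReal.ofReal (RVQSO.Zf v m (qsoMap (p r) (X N ω))) ∂μ := by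
          apply tsum_congr
          intro r
          rw [hfact N r _ (hgmeas r), hlaw N r]
      _ = ∑' r : ℕ, ∫⁻ ω, ENNReal.ofReal (ν r)
            * ENNReal.ofReal (RVQSO.Zf v m (qsoMap (p r) (X N ω))) ∂μ := by
          apply tsum_congr
          intro r
          have hmr : Measurable
              (fun ω => ENNReal.ofReal (RVQSO.Zf v m (qsoMap (p r) (X N ω)))) :=
            (hgmeas r).comp (hXmeas N)
          rw [lintegral_const_mul _ hmr]
      _ = ∫⁻ ω, ∑' r : ℕ, ENNReal.ofReal (ν r)
            * ENNReal.ofReal (RVQSO.Zf v m (qsoMap (p r) (X N ω))) ∂μ := by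
          rw [← lintegral_tsum]
          intro r
          exact (measurable_const.mul ((hgmeas r).comp (hXmeas N))).aemeasurable
      _ ≤ ∫⁻ ω, ENNReal.ofReal (RVQSO.rr v)
            * ENNReal.ofReal (RVQSO.Zf v m (X N ω)) ∂μ := by
          apply lintegral_mono
          intro ω
          have hy := hXmem N ω
          have hsummand : ∀ r : ℕ, 0 ≤ ν r * RVQSO.Zf v m (qsoMap (p r) (X N ω)) :=
            fun r => mul_nonneg (hν0 r) (RVQSO.Zf_nonneg hv hv8 _)
          have hsummable : Summable
              (fun r => ν r * RVQSO.Zf v m (qsoMap (p r) (X N ω))) := by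
            apply Summable.of_nonneg_of_le hsummand
              (fun r => mul_le_mul_of_nonneg_left (RVQSO.Zf_le hv hv8 _) (hν0 r))
            exact hνsum.mul_right _
          calc ∑' r : ℕ, ENNReal.ofReal (ν r)
                * ENNReal.ofReal (RVQSO.Zf v m (qsoMap (p r) (X N ω)))
              = ∑' r : ℕ, ENNReal.ofReal (ν r * RVQSO.Zf v m (qsoMap (p r) (X N ω))) := by
                apply tsum_congr
                intro r
                rw [ENNReal.ofReal_mul (hν0 r)]
            _ = ENNReal.ofReal
                  (∑' r : ℕ, ν r * RVQSO.Zf v m (qsoMap (p r) (X N ω))) :=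
                (ENNReal.ofReal_tsum_of_nonneg hsummand hsummable).symm
            _ ≤ ENNReal.ofReal (RVQSO.rr v * RVQSO.Zf v m (X N ω)) := by
                apply ENNReal.ofReal_le_ofReal
                exact RVQSO.step_real p hnonneg hsum hvol hsq ν hν0 hν1 hv hv8 hvle hy
            _ = ENNReal.ofReal (RVQSO.rr v)
                  * ENNReal.ofReal (RVQSO.Zf v m (X N ω)) :=
                ENNReal.ofReal_mul hrr0
      _ = ENNReal.ofReal (RVQSO.rr v) * Zn N := by
          rw [hZn]
          have hmz : Measurable
              (fun ω => ENNReal.ofReal (RVQSO.Zf v m (X N ω))) :=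
            ENNReal.measurable_ofReal.comp (hZfMeas.comp (hXmeas N))
          exact lintegral_const_mul _ hmz
  -- iterate
  have hZn0 : Zn 0 ≤ ENNReal.ofReal m := by
    rw [hZn]
    calc ∫⁻ ω, ENNReal.ofReal (RVQSO.Zf v m (X 0 ω)) ∂μ
        ≤ ∫⁻ _ω, ENNReal.ofReal m ∂μ := by
          apply lintegral_mono
          intro ω
          exact ENNReal.ofReal_le_ofReal (RVQSO.Zf_le hv hv8 _)
      _ = ENNReal.ofReal m := by
          rw [lintegral_const, measure_univ, mul_one]
  have hZnN : ∀ N, Zn N ≤ (ENNReal.ofReal (RVQSO.rr v))^N * ENNReal.ofReal m := by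
    intro N
    induction N with
    | zero => simpa using hZn0
    | succ N ih =>
        calc Zn (N+1) ≤ ENNReal.ofReal (RVQSO.rr v) * Zn N := hrec N
          _ ≤ ENNReal.ofReal (RVQSO.rr v)
              * ((ENNReal.ofReal (RVQSO.rr v))^N * ENNReal.ofReal m) :=
            mul_le_mul_right ih _
          _ = (ENNReal.ofReal (RVQSO.rr v))^(N+1) * ENNReal.ofReal m := by
            rw [pow_succ]; ring
  -- from bad event to the Lyapunov bound
  set e' : ℝ := min ε (1/2) with he'
  have he'pos : 0 < e' := lt_min hε (by norm_num)
  set c0 : ℝ := RVQSO.psi v e' with hc0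
  have hc0pos : 0 < c0 := RVQSO.psi_pos hv hv8 he'pos
  have hbadsub : ∀ n : ℕ,
      {ω | X (n+1) ω ∈ stdSimplex ℝ (Fin m) ∧
        ¬ ∃ i : Fin m, ∀ j : Fin m, j ≠ i → X (n+1) ω j < ε}
      ⊆ {ω | ENNReal.ofReal c0 ≤ ENNReal.ofReal (RVQSO.Zf v m (X (n+1) ω))} := by
    intro n ω hω
    obtain ⟨hmem, hbadω⟩ := hω
    obtain ⟨i0, -, hmax'⟩ := Finset.exists_max_image (Finset.univ : Finset (Fin m))
      (X (n+1) ω) Finset.univ_nonempty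
    have hmax : ∀ l, X (n+1) ω l ≤ X (n+1) ω i0 := fun l => hmax' l (Finset.mem_univ l)
    push_neg at hbadω
    obtain ⟨j, hjne, hjge⟩ := hbadω i0
    have hje' : e' ≤ X (n+1) ω j := le_trans (min_le_left _ _) hjge
    have h1 : c0 ≤ RVQSO.psi v (X (n+1) ω j) := RVQSO.psi_mono hv hv8 hje'
    have h2 : RVQSO.psi v (X (n+1) ω j) ≤ RVQSO.Zf v m (X (n+1) ω) :=
      RVQSO.Zf_ge_bad hv hv8 hmax hjne
    exact ENNReal.ofReal_le_ofReal (le_trans h1 h2)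
  have hμbad : ∀ n : ℕ,
      μ {ω | X (n+1) ω ∈ stdSimplex ℝ (Fin m) ∧
        ¬ ∃ i : Fin m, ∀ j : Fin m, j ≠ i → X (n+1) ω j < ε}
      ≤ (ENNReal.ofReal c0)⁻¹ * ((ENNReal.ofReal (RVQSO.rr v))^(n+1) * ENNReal.ofReal m) := by
    intro n
    have hmarkov : ENNReal.ofReal c0
        * μ {ω | ENNReal.ofReal c0 ≤ ENNReal.ofReal (RVQSO.Zf v m (X (n+1) ω))}
        ≤ Zn (n+1) := by
      rw [hZn]
      exact mul_meas_ge_le_lintegral₀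
        ((ENNReal.measurable_ofReal.comp (hZfMeas.comp (hXmeas (n+1)))).aemeasurable)
        (ENNReal.ofReal c0)
    have hc0ne : ENNReal.ofReal c0 ≠ 0 := by
      simp [ENNReal.ofReal_eq_zero]
      linarith
    have hc0top : ENNReal.ofReal c0 ≠ ⊤ := ENNReal.ofReal_ne_top
    calc μ {ω | X (n+1) ω ∈ stdSimplex ℝ (Fin m) ∧
          ¬ ∃ i : Fin m, ∀ j : Fin m, j ≠ i → X (n+1) ω j < ε}
        ≤ μ {ω | ENNReal.ofReal c0 ≤ ENNReal.ofReal (RVQSO.Zf v m (X (n+1) ω))} :=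
          measure_mono (hbadsub n)
      _ = (ENNReal.ofReal c0)⁻¹ * (ENNReal.ofReal c0
            * μ {ω | ENNReal.ofReal c0 ≤ ENNReal.ofReal (RVQSO.Zf v m (X (n+1) ω))}) := by
          rw [← mul_assoc, ENNReal.inv_mul_cancel hc0ne hc0top, one_mul]
      _ ≤ (ENNReal.ofReal c0)⁻¹ * Zn (n+1) := mul_le_mul_right hmarkov _
      _ ≤ (ENNReal.ofReal c0)⁻¹
            * ((ENNReal.ofReal (RVQSO.rr v))^(n+1) * ENNReal.ofReal m) :=
          mul_le_mul_right (hZnN (n+1)) _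
  -- final geometric summation
  have hfinal : (∑' n : ℕ, μ {ω | X (n+1) ω ∈ stdSimplex ℝ (Fin m) ∧
        ¬ ∃ i : Fin m, ∀ j : Fin m, j ≠ i → X (n+1) ω j < ε}) < ⊤ := by
    have hle := ENNReal.tsum_le_tsum hμbad
    have hq1 : ENNReal.ofReal (RVQSO.rr v) < 1 := by
      rw [← ENNReal.ofReal_one]
      exact ENNReal.ofReal_lt_ofReal_iff_of_nonneg hrr0 |>.2 hrr1
    have hgeom : (∑' n : ℕ, (ENNReal.ofReal (RVQSO.rr v))^(n+1)) < ⊤ := by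
      have h1 : (∑' n : ℕ, (ENNReal.ofReal (RVQSO.rr v))^(n+1))
          ≤ ∑' n : ℕ, (ENNReal.ofReal (RVQSO.rr v))^n :=
        ENNReal.tsum_le_tsum (fun n => pow_le_pow_right_of_le_one' hq1.le (by omega))
      rw [ENNReal.tsum_geometric] at h1
      apply lt_of_le_of_lt h1
      exact ENNReal.inv_lt_top.2 (tsub_pos_of_lt hq1)
    calc (∑' n : ℕ, μ _) ≤ ∑' n : ℕ, (ENNReal.ofReal c0)⁻¹
          * ((ENNReal.ofReal (RVQSO.rr v))^(n+1) * ENNReal.ofReal m) := hle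
      _ = (ENNReal.ofReal c0)⁻¹ * ENNReal.ofReal m
            * ∑' n : ℕ, (ENNReal.ofReal (RVQSO.rr v))^(n+1) := by
          rw [← ENNReal.tsum_mul_left]
          apply tsum_congr
          intro n
          ring
      _ < ⊤ := by
          apply ENNReal.mul_lt_top
          · apply ENNReal.mul_lt_top
            · exact ENNReal.inv_lt_top.2 (by simpa [ENNReal.ofReal_pos] using hc0pos)
            · exact ENNReal.ofReal_lt_top
          · exact hgeom
  exact hfinal
end
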